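/- arXiv:2501.05073 — 4 statements merged into one kernel-verified Lean document; each statement's English description precedes it below -/
import Mathlib

section
/- Let n ≥ 2, let A : ℝⁿ → ℝⁿ be an invertible linear map with det A > 0, and let u ∈ ℝⁿ be a unit vector. Then 1/H_O(A) ≤ H_I(A)^{1/(1−n)} ≤ T(A,u) ≤ H_O(A)^{1/(n−1)} ≤ H_I(A). -/
open Metric

/-- `l(A) = min_{|h|=1} |A h|`. -/
noncomputable def minNorm (n : ℕ)
    (A : EuclideanSpace ℝ (Fin n) →L[ℝ] EuclideanSpace ℝ (Fin n)) : ℝ :=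
  sInf ((fun h => ‖A h‖) '' sphere (0 : EuclideanSpace ℝ (Fin n)) 1)

/-- Inner dilatation coefficient `H_I(A) = |det A| / l(A)^n`. -/
noncomputable def innerDil (n : ℕ)
    (A : EuclideanSpace ℝ (Fin n) →L[ℝ] EuclideanSpace ℝ (Fin n)) : ℝ :=
  |LinearMap.det (A : EuclideanSpace ℝ (Fin n) →ₗ[ℝ] EuclideanSpace ℝ (Fin n))| /
    (minNorm n A) ^ n

/-- Outer dilatation coefficient `H_O(A) = ‖A‖^n / |det A|`. -/
noncomputable def outerDil (n : ℕ)
    (A : EuclideanSpace ℝ (Fin n) →L[ℝ] EuclideanSpace ℝ (Fin n)) : ℝ :=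
  ‖A‖ ^ n /
    |LinearMap.det (A : EuclideanSpace ℝ (Fin n) →ₗ[ℝ] EuclideanSpace ℝ (Fin n))|

/-- `𝓛(A,u) = max { |A h| · |h ⬝ u| : |h| = 1 }`. -/
noncomputable def bigLDir (n : ℕ)
    (A : EuclideanSpace ℝ (Fin n) →L[ℝ] EuclideanSpace ℝ (Fin n))
    (u : EuclideanSpace ℝ (Fin n)) : ℝ :=
  sSup {r : ℝ | ∃ h : EuclideanSpace ℝ (Fin n),
    ‖h‖ = 1 ∧ r = ‖A h‖ * abs ((inner ℝ h u : ℝ))}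

/-- Normal dilatation `T(A,u) = (𝓛(A,u)^n / det A)^(1/(n-1))` (for `det A > 0`). -/
noncomputable def normDil (n : ℕ)
    (A : EuclideanSpace ℝ (Fin n) →L[ℝ] EuclideanSpace ℝ (Fin n))
    (u : EuclideanSpace ℝ (Fin n)) : ℝ :=
  ((bigLDir n A u) ^ n /
    LinearMap.det (A : EuclideanSpace ℝ (Fin n) →ₗ[ℝ] EuclideanSpace ℝ (Fin n)))
    ^ (1 / ((n : ℝ) - 1))

section Aux

lemma minNorm_le (n : ℕ) (A : EuclideanSpace ℝ (Fin n) →L[ℝ] EuclideanSpace ℝ (Fin n))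
    {h : EuclideanSpace ℝ (Fin n)} (hh : ‖h‖ = 1) : minNorm n A ≤ ‖A h‖ := by
  apply csInf_le
  · exact ⟨0, by rintro r ⟨x, hx, rfl⟩; exact norm_nonneg _⟩
  · exact ⟨h, by simpa [mem_sphere_zero_iff_norm] using hh, rfl⟩

lemma minNorm_nonneg (n : ℕ) (A : EuclideanSpace ℝ (Fin n) →L[ℝ] EuclideanSpace ℝ (Fin n)) :
    0 ≤ minNorm n A := by
  apply Real.sInf_nonneg
  rintro r ⟨x, hx, rfl⟩
  exact norm_nonneg _

lemma nontrivial_euc (n : ℕ) (hn : 1 ≤ n) : Nontrivial (EuclideanSpace ℝ (Fin n)) := by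
  have : 0 < Module.finrank ℝ (EuclideanSpace ℝ (Fin n)) := by
    rw [finrank_euclideanSpace_fin]; omega
  exact Module.nontrivial_of_finrank_pos this

lemma exists_minNorm (n : ℕ) (hn : 1 ≤ n)
    (A : EuclideanSpace ℝ (Fin n) →L[ℝ] EuclideanSpace ℝ (Fin n)) :
    ∃ h : EuclideanSpace ℝ (Fin n), ‖h‖ = 1 ∧ ‖A h‖ = minNorm n A := by
  haveI := nontrivial_euc n hn
  have hne : (sphere (0 : EuclideanSpace ℝ (Fin n)) 1).Nonempty :=
    NormedSpace.sphere_nonempty.2 zero_le_one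
  obtain ⟨h, hh, hmin⟩ := (isCompact_sphere (0 : EuclideanSpace ℝ (Fin n)) 1).exists_isMinOn hne
    (by fun_prop : Continuous fun x => ‖A x‖).continuousOn
  refine ⟨h, mem_sphere_zero_iff_norm.1 hh, ?_⟩
  have hleast : IsLeast ((fun h => ‖A h‖) '' sphere (0 : EuclideanSpace ℝ (Fin n)) 1) ‖A h‖ := by
    constructor
    · exact ⟨h, hh, rfl⟩
    · rintro r ⟨x, hx, rfl⟩
      exact hmin hx
  exact hleast.csInf_eq.symm

lemma exists_maxNorm (n : ℕ) (hn : 1 ≤ n)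
    (A : EuclideanSpace ℝ (Fin n) →L[ℝ] EuclideanSpace ℝ (Fin n)) :
    ∃ v : EuclideanSpace ℝ (Fin n), ‖v‖ = 1 ∧ ‖A v‖ = ‖A‖ := by
  haveI := nontrivial_euc n hn
  have hne : (sphere (0 : EuclideanSpace ℝ (Fin n)) 1).Nonempty :=
    NormedSpace.sphere_nonempty.2 zero_le_one
  obtain ⟨v, hv, hmax⟩ := (isCompact_sphere (0 : EuclideanSpace ℝ (Fin n)) 1).exists_isMaxOn hne
    (by fun_prop : Continuous fun x => ‖A x‖).continuousOn
  have hv1 : ‖v‖ = 1 := mem_sphere_zero_iff_norm.1 hv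
  refine ⟨v, hv1, le_antisymm (A.unit_le_opNorm v hv1.le) ?_⟩
  refine A.opNorm_le_bound (norm_nonneg _) fun x => ?_
  rcases eq_or_ne x 0 with rfl | hx
  · simp
  · have hxn : ‖x‖ ≠ 0 := norm_ne_zero_iff.2 hx
    have hmem : (‖x‖⁻¹ • x) ∈ sphere (0 : EuclideanSpace ℝ (Fin n)) 1 := by
      simp [norm_smul, abs_of_nonneg (norm_nonneg x), inv_mul_cancel₀ hxn]
    have h2 : ‖A (‖x‖⁻¹ • x)‖ ≤ ‖A v‖ := hmax hmem
    rw [map_smul, norm_smul, norm_inv, norm_norm] at h2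
    calc ‖A x‖ = ‖x‖ * (‖x‖⁻¹ * ‖A x‖) := by field_simp
    _ ≤ ‖x‖ * ‖A v‖ := by
        apply mul_le_mul_of_nonneg_left _ (norm_nonneg x)
        simpa using h2
    _ = ‖A v‖ * ‖x‖ := mul_comm _ _

lemma key_det_bounds (n : ℕ) (hn : 1 ≤ n)
    (A : EuclideanSpace ℝ (Fin n) →L[ℝ] EuclideanSpace ℝ (Fin n)) :
    (‖A‖ * minNorm n A ^ (n - 1)) ^ 2 ≤
      (LinearMap.det (A : EuclideanSpace ℝ (Fin n) →ₗ[ℝ] EuclideanSpace ℝ (Fin n))) ^ 2 ∧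
    (LinearMap.det (A : EuclideanSpace ℝ (Fin n) →ₗ[ℝ] EuclideanSpace ℝ (Fin n))) ^ 2 ≤
      (minNorm n A * ‖A‖ ^ (n - 1)) ^ 2 := by
  classical
  haveI : Nonempty (Fin n) := Fin.pos_iff_nonempty.1 (by omega)
  set l := minNorm n A with hldef
  set N := ‖A‖ with hNdef
  set A' : EuclideanSpace ℝ (Fin n) →ₗ[ℝ] EuclideanSpace ℝ (Fin n) := A.toLinearMap with hA'
  set T : EuclideanSpace ℝ (Fin n) →ₗ[ℝ] EuclideanSpace ℝ (Fin n) :=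
    LinearMap.adjoint A' * A' with hTdef
  have hT : T.IsSymmetric := LinearMap.isSymmetric_adjoint_mul_self A'
  have hrank : Module.finrank ℝ (EuclideanSpace ℝ (Fin n)) = n := finrank_euclideanSpace_fin
  set b := hT.eigenvectorBasis hrank with hb
  set μ := hT.eigenvalues hrank with hμdef
  have happ : ∀ i, T (b i) = (μ i : ℝ) • b i := fun i =>
    hT.apply_eigenvectorBasis hrank i
  have hb1 : ∀ i, ‖b i‖ = 1 := fun i => b.orthonormal.1 i
  have hTx : ∀ x, (inner ℝ (T x) (x) : ℝ) = ‖A x‖ ^ 2 := fun x => by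
    have h1 : (inner ℝ (T x) (x) : ℝ) = (inner ℝ (A' x) (A' x) : ℝ) :=
      LinearMap.adjoint_inner_left A' x (A' x)
    rw [h1, real_inner_self_eq_norm_sq]; rfl
  have hμi : ∀ i, μ i = ‖A (b i)‖ ^ 2 := fun i => by
    have h1 := hTx (b i)
    rw [happ i, real_inner_smul_left, real_inner_self_eq_norm_sq, hb1 i] at h1
    simpa using h1
  have hμlo : ∀ i, l ^ 2 ≤ μ i := fun i => by
    rw [hμi i]; exact pow_le_pow_left₀ (minNorm_nonneg n A) (minNorm_le n A (hb1 i)) 2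
  have hμhi : ∀ i, μ i ≤ N ^ 2 := fun i => by
    rw [hμi i]; exact pow_le_pow_left₀ (norm_nonneg _) (A.unit_le_opNorm _ (hb1 i).le) 2
  have hexp : ∀ x, (inner ℝ (T x) (x) : ℝ) = ∑ i, μ i * (inner ℝ (b i) (x) : ℝ) ^ 2 := fun x => by
    calc (inner ℝ (T x) (x) : ℝ) = (inner ℝ (x) (T x) : ℝ) := real_inner_comm _ _
    _ = ∑ i, (inner ℝ (x) (b i) : ℝ) * (inner ℝ (b i) (T x) : ℝ) :=
        (b.sum_inner_mul_inner x (T x)).symm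
    _ = ∑ i, μ i * (inner ℝ (b i) (x) : ℝ) ^ 2 := by
        refine Finset.sum_congr rfl fun i _ => ?_
        rw [← hT (b i) x, happ i, real_inner_smul_left, real_inner_comm x (b i)]
        ring
  have hpar : ∀ x : EuclideanSpace ℝ (Fin n),
      ∑ i, (inner ℝ (b i) (x) : ℝ) ^ 2 = ‖x‖ ^ 2 := fun x => by
    have h1 := b.sum_inner_mul_inner x x
    rw [real_inner_self_eq_norm_sq] at h1
    rw [← h1]
    refine Finset.sum_congr rfl fun i _ => ?_
    rw [real_inner_comm x (b i)]; ring
  obtain ⟨i0, -, hi0⟩ := Finset.exists_max_image Finset.univ μ Finset.univ_nonempty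
  obtain ⟨i1, -, hi1⟩ := Finset.exists_min_image Finset.univ μ Finset.univ_nonempty
  obtain ⟨v, hv1, hvN⟩ := exists_maxNorm n hn A
  obtain ⟨w, hw1, hwl⟩ := exists_minNorm n hn A
  have hN2 : N ^ 2 ≤ μ i0 := by
    have h1 : ∑ i, μ i * (inner ℝ (b i) (v) : ℝ) ^ 2 = N ^ 2 := by rw [← hexp v, hTx v, hvN]
    have h2 : ∑ i, μ i * (inner ℝ (b i) (v) : ℝ) ^ 2 ≤ ∑ i, μ i0 * (inner ℝ (b i) (v) : ℝ) ^ 2 :=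
      Finset.sum_le_sum fun i _ =>
        mul_le_mul_of_nonneg_right (hi0 i (Finset.mem_univ i)) (sq_nonneg _)
    rw [← Finset.mul_sum, hpar v, hv1, one_pow, mul_one, h1] at h2
    exact h2
  have hl2 : μ i1 ≤ l ^ 2 := by
    have h1 : ∑ i, μ i * (inner ℝ (b i) (w) : ℝ) ^ 2 = l ^ 2 := by rw [← hexp w, hTx w, hwl]
    have h2 : ∑ i, μ i1 * (inner ℝ (b i) (w) : ℝ) ^ 2 ≤ ∑ i, μ i * (inner ℝ (b i) (w) : ℝ) ^ 2 :=
      Finset.sum_le_sum fun i _ =>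
        mul_le_mul_of_nonneg_right (hi1 i (Finset.mem_univ i)) (sq_nonneg _)
    rw [← Finset.mul_sum, hpar w, hw1, one_pow, mul_one, h1] at h2
    exact h2
  have hdet2 : (LinearMap.det A') ^ 2 = ∏ i, μ i := by
    have hadj : LinearMap.det (LinearMap.adjoint A') = LinearMap.det A' := by
      let s := EuclideanSpace.basisFun (Fin n) ℝ
      rw [← LinearMap.det_toMatrix s.toBasis, ← LinearMap.det_toMatrix s.toBasis A',
        LinearMap.toMatrix_adjoint, Matrix.det_conjTranspose, star_trivial]
    have hdiag : LinearMap.toMatrix b.toBasis b.toBasis T = Matrix.diagonal μ := by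
      ext i j
      rw [LinearMap.toMatrix_apply, OrthonormalBasis.coe_toBasis, happ j, map_smul]
      by_cases h : i = j
      · subst h; simp [Matrix.diagonal]
      · simp [Matrix.diagonal, h, Finsupp.single_apply, Ne.symm h]
    have hTdet : LinearMap.det T = ∏ i, μ i := by
      rw [← LinearMap.det_toMatrix b.toBasis, hdiag, Matrix.det_diagonal]
    rw [← hTdet, hTdef, LinearMap.det.map_mul, hadj, sq]
  have hcard : (Finset.univ.erase i0).card = n - 1 := by
    rw [Finset.card_erase_of_mem (Finset.mem_univ i0), Finset.card_univ, Fintype.card_fin]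
  have hcard1 : (Finset.univ.erase i1).card = n - 1 := by
    rw [Finset.card_erase_of_mem (Finset.mem_univ i1), Finset.card_univ, Fintype.card_fin]
  have hsq : ∀ a c : ℝ, (a * c ^ (n-1)) ^ 2 = a ^ 2 * (c ^ 2) ^ (n - 1) := fun a c => by
    rw [mul_pow, ← pow_mul, Nat.mul_comm, pow_mul]
  have hdetA : LinearMap.det (A : EuclideanSpace ℝ (Fin n) →ₗ[ℝ] EuclideanSpace ℝ (Fin n)) =
      LinearMap.det A' := rfl
  constructor
  · rw [hdetA, hdet2, hsq, ← Finset.mul_prod_erase Finset.univ μ (Finset.mem_univ i0)]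
    apply mul_le_mul hN2 _ (by positivity) (le_trans (sq_nonneg l) (hμlo i0))
    calc (l ^ 2) ^ (n - 1) = ∏ _i ∈ Finset.univ.erase i0, l ^ 2 := by
          rw [Finset.prod_const, hcard]
    _ ≤ ∏ i ∈ Finset.univ.erase i0, μ i :=
        Finset.prod_le_prod (fun i _ => sq_nonneg l) (fun i _ => hμlo i)
  · rw [hdetA, hdet2, hsq, ← Finset.mul_prod_erase Finset.univ μ (Finset.mem_univ i1)]
    apply mul_le_mul hl2 _ (Finset.prod_nonneg fun i _ => le_trans (sq_nonneg l) (hμlo i))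
      (sq_nonneg l)
    calc ∏ i ∈ Finset.univ.erase i1, μ i ≤ ∏ _i ∈ Finset.univ.erase i1, N ^ 2 :=
        Finset.prod_le_prod (fun i _ => le_trans (sq_nonneg l) (hμlo i)) (fun i _ => hμhi i)
    _ = (N ^ 2) ^ (n - 1) := by rw [Finset.prod_const, hcard1]

end Aux

theorem normal_dilatation_bounds (n : ℕ) (hn : 2 ≤ n)
    (A : EuclideanSpace ℝ (Fin n) →L[ℝ] EuclideanSpace ℝ (Fin n))
    (hA : Function.Bijective A)
    (hdet : 0 < LinearMap.det
      (A : EuclideanSpace ℝ (Fin n) →ₗ[ℝ] EuclideanSpace ℝ (Fin n)))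
    (u : EuclideanSpace ℝ (Fin n)) (hu : ‖u‖ = 1) :
    1 / outerDil n A ≤ (innerDil n A) ^ (1 / (1 - (n : ℝ))) ∧
    (innerDil n A) ^ (1 / (1 - (n : ℝ))) ≤ normDil n A u ∧
    normDil n A u ≤ (outerDil n A) ^ (1 / ((n : ℝ) - 1)) ∧
    (outerDil n A) ^ (1 / ((n : ℝ) - 1)) ≤ innerDil n A := by
  have hn1 : 1 ≤ n := by omega
  obtain ⟨m, hm⟩ : ∃ m, n = m + 1 := ⟨n - 1, by omega⟩
  have hm1 : 1 ≤ m := by omega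
  have hmpos : (0 : ℝ) < (m : ℝ) := by exact_mod_cast hm1
  set l := minNorm n A with hldef
  set N := ‖A‖ with hNdef
  set d := LinearMap.det (A : EuclideanSpace ℝ (Fin n) →ₗ[ℝ] EuclideanSpace ℝ (Fin n))
    with hddef
  have hd0 : 0 < d := hdet
  -- positivity of l
  obtain ⟨h0, hh0, hh0l⟩ := exists_minNorm n hn1 A
  have hl0 : 0 < l := by
    rw [hldef, ← hh0l]
    apply norm_pos_iff.2
    intro hc
    have : h0 = 0 := hA.injective (by simpa using hc)
    rw [this] at hh0; simp at hh0
  -- bigLDir facts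
  set S : Set ℝ := {r : ℝ | ∃ h : EuclideanSpace ℝ (Fin n),
    ‖h‖ = 1 ∧ r = ‖A h‖ * abs ((inner ℝ h u : ℝ))} with hSdef
  have hLdef : bigLDir n A u = sSup S := rfl
  set L := bigLDir n A u with hLd
  have hub : ∀ r ∈ S, r ≤ N := by
    rintro r ⟨h, hh, rfl⟩
    calc ‖A h‖ * |(inner ℝ h u : ℝ)| ≤ N * 1 := by
          apply mul_le_mul (A.unit_le_opNorm h hh.le) _ (abs_nonneg _) (norm_nonneg A)
          calc |(inner ℝ h u : ℝ)| ≤ ‖h‖ * ‖u‖ := abs_real_inner_le_norm h u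
          _ = 1 := by rw [hh, hu, mul_one]
    _ = N := mul_one N
  have hmemAu : ‖A u‖ ∈ S := by
    refine ⟨u, hu, ?_⟩
    have : (inner ℝ u u : ℝ) = 1 := by
      rw [real_inner_self_eq_norm_sq, hu]; norm_num
    rw [this]; norm_num
  have hAuL : ‖A u‖ ≤ L := by
    rw [hLdef]
    exact le_csSup ⟨N, hub⟩ hmemAu
  have hLN : L ≤ N := by
    rw [hLdef]
    exact csSup_le ⟨‖A u‖, hmemAu⟩ hub
  have hlL : l ≤ L := le_trans (minNorm_le n A hu) hAuL
  have hL0 : 0 < L := lt_of_lt_of_le hl0 hlL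
  have hN0 : 0 < N := lt_of_lt_of_le hL0 hLN
  -- key determinant bounds
  obtain ⟨k1, k2⟩ := key_det_bounds n hn1 A
  have hnm : n - 1 = m := by omega
  rw [hnm] at k1 k2
  have h1 : N * l ^ m ≤ d := by
    have ha : 0 ≤ N * l ^ m := by positivity
    exact (pow_le_pow_iff_left₀ ha hd0.le two_ne_zero).1 k1
  have h2 : d ≤ l * N ^ m := by
    have ha : 0 ≤ l * N ^ m := by positivity
    exact (pow_le_pow_iff_left₀ hd0.le ha two_ne_zero).1 k2
  -- dilatation values
  have habs : |d| = d := abs_of_pos hd0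
  have hHI : innerDil n A = d / l ^ n := by rw [innerDil, habs]
  have hHO : outerDil n A = N ^ n / d := by rw [outerDil, habs]
  have hHIpos : 0 < d / l ^ n := by positivity
  have hHOpos : 0 < N ^ n / d := by positivity
  -- exponent rewriting
  have he1 : 1 / (1 - (n : ℝ)) = -((m : ℝ)⁻¹) := by
    rw [hm]; push_cast; rw [show (1 : ℝ) - ((m : ℝ) + 1) = -(m : ℝ) by ring, div_neg, one_div]
  have he2 : 1 / ((n : ℝ) - 1) = ((m : ℝ)⁻¹) := by
    rw [hm]; push_cast; rw [show ((m : ℝ) + 1) - 1 = (m : ℝ) by ring, one_div]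
  -- core power inequalities
  have core1 : d / l ^ n ≤ (N ^ n / d) ^ m := by
    rw [div_pow, div_le_div_iff₀ (by positivity) (by positivity)]
    have hp : d ^ n ≤ (l * N ^ m) ^ n := pow_le_pow_left₀ hd0.le h2 n
    calc d * d ^ m = d ^ n := by rw [hm, pow_succ']
    _ ≤ (l * N ^ m) ^ n := hp
    _ = (N ^ n) ^ m * l ^ n := by
        rw [mul_pow, pow_right_comm, mul_comm]
  have core2 : N ^ n / d ≤ (d / l ^ n) ^ m := by
    rw [div_pow, div_le_div_iff₀ (by positivity) (by positivity)]
    have hp : (N * l ^ m) ^ n ≤ d ^ n := pow_le_pow_left₀ (by positivity) h1 n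
    calc N ^ n * (l ^ n) ^ m = (N * l ^ m) ^ n := by
          rw [mul_pow, pow_right_comm]
    _ ≤ d ^ n := hp
    _ = d ^ m * d := by rw [hm, pow_succ]
  -- assemble
  refine ⟨?_, ?_, ?_, ?_⟩
  · -- 1 / HO ≤ HI ^ (1/(1-n))
    rw [hHI, hHO, he1, Real.rpow_neg hHIpos.le, one_div]
    apply inv_anti₀ (Real.rpow_pos_of_pos hHIpos _)
    rw [Real.rpow_inv_le_iff_of_pos hHIpos.le hHOpos.le hmpos, Real.rpow_natCast]
    exact core1
  · -- HI ^ (1/(1-n)) ≤ normDil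
    rw [hHI, he1, normDil, he2, ← hddef, ← hLd]
    rw [Real.rpow_neg hHIpos.le, ← Real.inv_rpow hHIpos.le]
    apply Real.rpow_le_rpow (by positivity) _ (by positivity)
    rw [inv_div]
    gcongr
  · -- normDil ≤ HO ^ (1/(n-1))
    rw [hHO, normDil, he2, ← hddef, ← hLd]
    apply Real.rpow_le_rpow (by positivity) _ (by positivity)
    gcongr
  · -- HO ^ (1/(n-1)) ≤ HI
    rw [hHI, hHO, he2]
    rw [Real.rpow_inv_le_iff_of_pos hHOpos.le hHIpos.le hmpos, Real.rpow_natCast]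
    exact core2
end

section
/- Let n ≥ 2 and let H be a dominating factor with parameter t₀, and let t₁ ≥ max{t₀, 1}. Then ∫_{t₁}^{∞} H(t) t^{−n/(n−1)} dt = +∞ if and only if ∫_{H(t₁)}^{∞} (H⁻¹(τ))^{−1/(n−1)} dτ = +∞. (That is, H is of divergence type if and only if the integral of (H⁻¹(τ))^{−1/(n−1)} over [H(t₁), ∞) diverges.) -/
open Filter MeasureTheory Set

/-- `H : [0,∞) → ℝ` is a dominating factor with parameter `t₀` if `H` is continuous
and strictly increasing on `[t₀,∞)`, constant (equal to `H t₀`) on `[0,t₀]`, and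
`t ↦ e^{H t}` is convex on `[0,∞)`. -/
def DominatingFactor (H : ℝ → ℝ) (t₀ : ℝ) : Prop :=
  0 ≤ t₀ ∧ ContinuousOn H (Set.Ici t₀) ∧ StrictMonoOn H (Set.Ici t₀) ∧
    (∀ t ∈ Set.Icc (0 : ℝ) t₀, H t = H t₀) ∧
    ConvexOn ℝ (Set.Ici (0 : ℝ)) (fun t => Real.exp (H t))



lemma tendsto_intInt_iff_lintegral_top {f : ℝ → ℝ} {a : ℝ}
    (hint : ∀ T, IntegrableOn f (Set.Ioc a T))
    (hpos : ∀ᵐ t ∂(volume.restrict (Set.Ioi a)), 0 ≤ f t) :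
    Tendsto (fun T => ∫ t in a..T, f t) atTop atTop ↔
      ∫⁻ t in Set.Ioi a, ENNReal.ofReal (f t) = ⊤ := by
  have hU : Set.Ioi a = ⋃ n : ℕ, Set.Ioc a (a + n) := by
    ext t
    simp only [mem_Ioi, mem_iUnion, mem_Ioc]
    constructor
    · intro ht
      obtain ⟨n, hn⟩ := exists_nat_ge (t - a)
      exact ⟨n, ht, by linarith⟩
    · rintro ⟨n, h1, _⟩; exact h1
  have hm : AEMeasurable f (volume.restrict (Set.Ioi a)) := by
    rw [hU]
    rw [aemeasurable_iUnion_iff]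
    exact fun n => (hint _).aemeasurable
  set f' := hm.mk f with hf'def
  have hf'meas : Measurable f' := hm.measurable_mk
  have hff' : f =ᵐ[volume.restrict (Set.Ioi a)] f' := hm.ae_eq_mk
  set ν := volume.withDensity (fun t => ENNReal.ofReal (f' t)) with hνdef
  have hν : ∀ s : Set ℝ, MeasurableSet s → s ⊆ Set.Ioi a →
      ν s = ∫⁻ t in s, ENNReal.ofReal (f t) := by
    intro s hs hsub
    rw [hνdef, withDensity_apply _ hs]
    refine lintegral_congr_ae ?_
    have : f =ᵐ[volume.restrict s] f' :=
      ae_restrict_of_ae_restrict_of_subset hsub hff'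
    filter_upwards [this] with t ht using by rw [ht]
  have hfin : ∀ T, ν (Set.Ioc a T) ≠ ⊤ := by
    intro T
    rw [hν _ measurableSet_Ioc Set.Ioc_subset_Ioi_self]
    have h2 : (∫⁻ t in Set.Ioc a T, (‖f t‖₊ : ENNReal)) < ⊤ := (hint T).2
    exact ne_top_of_le_ne_top h2.ne
      (lintegral_mono fun t => Real.ofReal_le_enorm (f t))
  have hFeq : ∀ T, a ≤ T → (∫ t in a..T, f t) = (ν (Set.Ioc a T)).toReal := by
    intro T hT
    rw [intervalIntegral.integral_of_le hT,
      integral_eq_lintegral_of_nonneg_ae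
        (ae_restrict_of_ae_restrict_of_subset Set.Ioc_subset_Ioi_self hpos)
        (hint T).1,
      hν _ measurableSet_Ioc Set.Ioc_subset_Ioi_self]
  have hνIoi : ν (Set.Ioi a) = ∫⁻ t in Set.Ioi a, ENNReal.ofReal (f t) :=
    hν _ measurableSet_Ioi subset_rfl
  have hsup : ν (Set.Ioi a) = ⨆ n : ℕ, ν (Set.Ioc a (a + n)) := by
    rw [hU]
    have hmon : Monotone fun n : ℕ => Set.Ioc a (a + (n : ℝ)) := fun n m hnm =>
      Set.Ioc_subset_Ioc_right (by simpa using (Nat.cast_le (α := ℝ)).mpr hnm)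
    exact Directed.measure_iUnion hmon.directed_le
  constructor
  · intro h
    by_contra htop
    rw [← hνIoi] at htop
    have hb : ∀ T, a ≤ T → (∫ t in a..T, f t) ≤ (ν (Set.Ioi a)).toReal := by
      intro T hT
      rw [hFeq T hT]
      exact ENNReal.toReal_mono htop (measure_mono Set.Ioc_subset_Ioi_self)
    obtain ⟨T, hT1, hT2⟩ :=
      ((h.eventually (eventually_ge_atTop ((ν (Set.Ioi a)).toReal + 1))).and
        (eventually_ge_atTop a)).exists
    linarith [hb T hT2]
  · intro h
    rw [tendsto_atTop]
    intro b
    have htop : (⨆ n : ℕ, ν (Set.Ioc a (a + n))) = ⊤ := by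
      rw [← hsup, hνIoi]; exact h
    have : ENNReal.ofReal (max b 0) < ⨆ n : ℕ, ν (Set.Ioc a (a + n)) := by
      rw [htop]; exact ENNReal.ofReal_lt_top
    obtain ⟨n, hn⟩ := lt_iSup_iff.mp this
    filter_upwards [eventually_ge_atTop (a + (n : ℝ))] with T hT
    have haT : a ≤ T := le_trans (le_add_of_nonneg_right (Nat.cast_nonneg n)) hT
    rw [hFeq T haT]
    calc b ≤ max b 0 := le_max_left _ _
      _ = (ENNReal.ofReal (max b 0)).toReal := by
            rw [ENNReal.toReal_ofReal (le_max_right _ _)]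
      _ ≤ (ν (Set.Ioc a (a + n))).toReal :=
            ENNReal.toReal_mono (hfin _) hn.le
      _ ≤ (ν (Set.Ioc a T)).toReal :=
            ENNReal.toReal_mono (hfin _) (measure_mono (Set.Ioc_subset_Ioc_right hT))


lemma tendsto_add_const_iff' {g : ℝ → ℝ} (c : ℝ) :
    Tendsto (fun T => c + g T) atTop atTop ↔ Tendsto g atTop atTop := by
  constructor
  · intro h
    have := tendsto_atTop_add_const_left atTop (-c) h
    simpa using this
  · exact fun h => tendsto_atTop_add_const_left atTop c h

lemma tendsto_intInt_shift {f : ℝ → ℝ} {a b : ℝ} (hab : a ≤ b)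
    (hint : ∀ T, IntegrableOn f (Set.Ioc a T)) :
    Tendsto (fun T => ∫ t in a..T, f t) atTop atTop ↔
      Tendsto (fun T => ∫ t in b..T, f t) atTop atTop := by
  have hii : ∀ c d : ℝ, a ≤ c → a ≤ d → IntervalIntegrable f volume c d := by
    intro c d hc hd
    rw [intervalIntegrable_iff]
    exact (hint (max c d)).mono_set fun t ht =>
      ⟨lt_of_le_of_lt (le_min hc hd) ht.1, ht.2⟩
  have key : ∀ᶠ T in atTop, (∫ t in a..T, f t) = (∫ t in a..b, f t) + ∫ t in b..T, f t := by
    filter_upwards [eventually_ge_atTop b] with T hT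
    exact (intervalIntegral.integral_add_adjacent_intervals (hii a b le_rfl hab)
      (hii b T hab (hab.trans hT))).symm
  rw [tendsto_congr' key, tendsto_add_const_iff']


lemma integrableOn_Hmul {H : ℝ → ℝ} {t₀ t₁ : ℝ} (hcont : ContinuousOn H (Set.Ici t₀))
    (ht₀1 : t₀ ≤ t₁) (ht11 : 1 ≤ t₁) (α : ℝ) (T : ℝ) :
    IntegrableOn (fun t => H t * t ^ α) (Set.Ioc t₁ T) := by
  have hfc : ContinuousOn (fun t => H t * t ^ α) (Set.Icc t₁ (max t₁ T)) := by
    refine ContinuousOn.mul (hcont.mono ?_) (ContinuousOn.rpow_const continuousOn_id ?_)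
    · exact fun t ht => le_trans ht₀1 ht.1
    · intro t ht
      exact Or.inl (ne_of_gt (lt_of_lt_of_le one_pos (le_trans ht11 ht.1)))
  exact (hfc.integrableOn_Icc).mono_set fun t ht => ⟨ht.1.le, le_max_of_le_right ht.2⟩

lemma hinv_aux {H : ℝ → ℝ} {t₀ t₁ : ℝ} (hmono : StrictMonoOn H (Set.Ici t₀))
    (ht₀1 : t₀ ≤ t₁) {Hinv : ℝ → ℝ}
    (hinv₂ : ∀ τ ∈ Set.Ici (H t₀), Hinv τ ∈ Set.Ici t₀ ∧ H (Hinv τ) = τ)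
    {τ : ℝ} (hτ : H t₁ ≤ τ) : t₁ ≤ Hinv τ ∧ Hinv τ ∈ Set.Ici t₀ ∧ H (Hinv τ) = τ := by
  have hτ0 : H t₀ ≤ τ := le_trans (hmono.monotoneOn (le_refl t₀) ht₀1 ht₀1) hτ
  obtain ⟨h1, h2⟩ := hinv₂ τ hτ0
  refine ⟨?_, h1, h2⟩
  by_contra hlt
  push_neg at hlt
  have := hmono h1 (mem_Ici.mpr ht₀1) hlt
  rw [h2] at this
  exact absurd hτ (not_le.mpr this)

lemma g_mono {H : ℝ → ℝ} {t₀ t₁ : ℝ} (hmono : StrictMonoOn H (Set.Ici t₀))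
    (ht₀1 : t₀ ≤ t₁) {Hinv : ℝ → ℝ}
    (hinv₂ : ∀ τ ∈ Set.Ici (H t₀), Hinv τ ∈ Set.Ici t₀ ∧ H (Hinv τ) = τ) :
    Monotone (fun τ => Hinv (max τ (H t₁))) := by
  intro τ τ' h
  have h1 := hinv_aux hmono ht₀1 hinv₂ (le_max_right τ (H t₁))
  have h2 := hinv_aux hmono ht₀1 hinv₂ (le_max_right τ' (H t₁))
  by_contra hlt
  push_neg at hlt
  have := hmono h2.2.1 h1.2.1 hlt
  rw [h1.2.2, h2.2.2] at this
  exact absurd this (not_lt.mpr (max_le_max h (le_refl _)))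

lemma integrableOn_HinvRpow {H : ℝ → ℝ} {t₀ t₁ : ℝ} (hmono : StrictMonoOn H (Set.Ici t₀))
    (ht₀1 : t₀ ≤ t₁) (ht11 : 1 ≤ t₁) {Hinv : ℝ → ℝ}
    (hinv₂ : ∀ τ ∈ Set.Ici (H t₀), Hinv τ ∈ Set.Ici t₀ ∧ H (Hinv τ) = τ)
    {β : ℝ} (hβ : β ≤ 0) (T : ℝ) :
    IntegrableOn (fun τ => Hinv τ ^ β) (Set.Ioc (H t₁) T) := by
  set g := fun τ => Hinv (max τ (H t₁)) with hgdef
  have hg1 : ∀ τ, 1 ≤ g τ := fun τ =>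
    le_trans ht11 (hinv_aux hmono ht₀1 hinv₂ (le_max_right τ (H t₁))).1
  have hgmeas : Measurable fun τ => g τ ^ β :=
    (g_mono hmono ht₀1 hinv₂).measurable.pow measurable_const
  have hbase : IntegrableOn (fun τ => g τ ^ β) (Set.Ioc (H t₁) T) := by
    apply Measure.integrableOn_of_bounded (M := 1) measure_Ioc_lt_top.ne
      hgmeas.aestronglyMeasurable
    refine ae_of_all _ fun τ => ?_
    rw [Real.norm_eq_abs, abs_of_nonneg (Real.rpow_nonneg (by linarith [hg1 τ]) _)]
    exact Real.rpow_le_one_of_one_le_of_nonpos (hg1 τ) hβ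
  refine hbase.congr_fun (fun τ hτ => ?_) measurableSet_Ioc
  rw [hgdef]
  simp only []
  rw [max_eq_left hτ.1.le]


section
variable {dummy : Unit}

lemma key_iff (n : ℕ) (hn : 2 ≤ n) (H : ℝ → ℝ) (t₀ : ℝ)
    (hcont : ContinuousOn H (Set.Ici t₀)) (hmono : StrictMonoOn H (Set.Ici t₀))
    (Hinv : ℝ → ℝ)
    (hinv₂ : ∀ τ ∈ Set.Ici (H t₀), Hinv τ ∈ Set.Ici t₀ ∧ H (Hinv τ) = τ)
    (t₁ : ℝ) (ht₀1 : t₀ ≤ t₁) (ht11 : 1 ≤ t₁) (hpos1 : 1 ≤ H t₁) :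
    Tendsto (fun T => ∫ t in t₁..T, H t * t ^ (-(n : ℝ) / ((n : ℝ) - 1))) atTop atTop ↔
    Tendsto (fun T => ∫ τ in (H t₁)..T, (Hinv τ) ^ (-1 / ((n : ℝ) - 1))) atTop atTop := by
  have hk : (1:ℝ) ≤ (n:ℝ) - 1 := by
    have h2 : (2:ℝ) ≤ (n:ℝ) := by exact_mod_cast hn
    linarith
  have hk0 : (0:ℝ) < (n:ℝ) - 1 := by linarith
  set α : ℝ := -(n : ℝ) / ((n : ℝ) - 1) with hαdef
  set β : ℝ := -1 / ((n : ℝ) - 1) with hβdef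
  have hα : α < -1 := by
    rw [hαdef, div_lt_iff₀ hk0]; push_cast; linarith
  have hαβ : α + 1 = β := by
    rw [hαdef, hβdef]; field_simp; ring
  have hβ0 : β ≤ 0 := by
    rw [hβdef]; apply div_nonpos_of_nonpos_of_nonneg <;> linarith
  have ht₁0 : (0:ℝ) < t₁ := lt_of_lt_of_le one_pos ht11
  have hmonoOn := hmono.monotoneOn
  have hHmem : ∀ t : ℝ, t₁ ≤ t → t ∈ Set.Ici t₀ ∧ H t₁ ≤ H t := fun t ht =>
    ⟨mem_Ici.mpr (le_trans ht₀1 ht),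
      hmonoOn (mem_Ici.mpr ht₀1) (mem_Ici.mpr (le_trans ht₀1 ht)) ht⟩
  set g : ℝ → ℝ := fun τ => Hinv (max τ (H t₁)) with hgdef
  have hgmem : ∀ τ, t₁ ≤ g τ ∧ g τ ∈ Set.Ici t₀ ∧ H (g τ) = max τ (H t₁) :=
    fun τ => hinv_aux hmono ht₀1 hinv₂ (le_max_right _ _)
  have hg_eq : ∀ τ, H t₁ ≤ τ → g τ = Hinv τ := fun τ h => by
    rw [hgdef]; simp [max_eq_left h]
  have hg_gt : ∀ τ, H t₁ < τ → t₁ < g τ := by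
    intro τ h
    rcases hgmem τ with ⟨h1, h2, h3⟩
    rcases lt_or_ge t₁ (g τ) with h' | h'
    · exact h'
    · exfalso
      have hle : H (g τ) ≤ H t₁ := hmonoOn h2 (mem_Ici.mpr ht₀1) h'
      rw [h3] at hle
      exact absurd (le_trans (le_max_left τ (H t₁)) hle) (not_le.mpr h)
  have hg_meas : Measurable g := (g_mono hmono ht₀1 hinv₂).measurable
  have hg_le_iff : ∀ τ t, H t₁ < τ → t ∈ Set.Ici t₀ → (g τ ≤ t ↔ τ ≤ H t) := by
    intro τ t hτ ht
    rcases hgmem τ with ⟨h1, h2, h3⟩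
    rw [← hmono.le_iff_le h2 ht, h3, max_eq_left hτ.le]
  -- Step A
  have hintf := fun T => integrableOn_Hmul hcont ht₀1 ht11 α T
  have hposf : ∀ᵐ t ∂(volume.restrict (Set.Ioi t₁)), 0 ≤ H t * t ^ α := by
    rw [ae_restrict_iff' measurableSet_Ioi]
    refine ae_of_all _ fun t ht => mul_nonneg ?_
      (Real.rpow_nonneg (by linarith [mem_Ioi.mp ht]) _)
    have := (hHmem t (mem_Ioi.mp ht).le).2
    linarith
  have hA := tendsto_intInt_iff_lintegral_top hintf hposf
  -- Step B
  have hintG := fun T => integrableOn_HinvRpow hmono ht₀1 ht11 hinv₂ hβ0 T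
  have hposG : ∀ᵐ τ ∂(volume.restrict (Set.Ioi (H t₁))), 0 ≤ Hinv τ ^ β := by
    rw [ae_restrict_iff' measurableSet_Ioi]
    refine ae_of_all _ fun τ hτ => Real.rpow_nonneg ?_ _
    have h := hinv_aux hmono ht₀1 hinv₂ (mem_Ioi.mp hτ).le
    linarith [h.1]
  have hB := tendsto_intInt_iff_lintegral_top hintG hposG
  rw [hA, hB]
  set L₁ : ENNReal := ∫⁻ t in Set.Ioi t₁, ENNReal.ofReal (H t * t ^ α) with hL₁
  set L₂ : ENNReal := ∫⁻ τ in Set.Ioi (H t₁), ENNReal.ofReal (Hinv τ ^ β) with hL₂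
  set L₁' : ENNReal := ∫⁻ t in Set.Ioi t₁, ENNReal.ofReal ((H t - H t₁) * t ^ α) with hL₁'
  -- Step C
  have hmeas_rpow : Measurable fun t : ℝ => ENNReal.ofReal (t ^ α) :=
    (measurable_id.pow measurable_const).ennreal_ofReal
  have hCfin : (∫⁻ t in Set.Ioi t₁, ENNReal.ofReal (H t₁ * t ^ α)) ≠ ⊤ := by
    have hint0 : IntegrableOn (fun t : ℝ => t ^ α) (Set.Ioi t₁) :=
      integrableOn_Ioi_rpow_of_lt hα ht₁0
    have hnn : 0 ≤ᵐ[volume.restrict (Set.Ioi t₁)] fun t : ℝ => t ^ α := by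
      filter_upwards [ae_restrict_mem measurableSet_Ioi] with t ht
      exact Real.rpow_nonneg (by linarith [mem_Ioi.mp ht]) _
    have heq : (∫⁻ t in Set.Ioi t₁, ENNReal.ofReal (H t₁ * t ^ α))
        = ENNReal.ofReal (H t₁) * ENNReal.ofReal (∫ t in Set.Ioi t₁, t ^ α) := by
      rw [ofReal_integral_eq_lintegral_ofReal hint0 hnn,
        ← lintegral_const_mul _ hmeas_rpow]
      exact lintegral_congr fun t => ENNReal.ofReal_mul (by linarith)
    rw [heq]
    exact ENNReal.mul_ne_top ENNReal.ofReal_ne_top ENNReal.ofReal_ne_top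
  have hC1 : L₁' ≤ L₁ := by
    rw [hL₁', hL₁]
    refine lintegral_mono_ae ?_
    rw [ae_restrict_iff' measurableSet_Ioi]
    refine ae_of_all _ fun t ht => ENNReal.ofReal_le_ofReal ?_
    have hHt := (hHmem t (mem_Ioi.mp ht).le).2
    have hrp : (0:ℝ) ≤ t ^ α := Real.rpow_nonneg (by linarith [mem_Ioi.mp ht]) _
    nlinarith
  have hmeasC : Measurable fun t : ℝ => ENNReal.ofReal (H t₁ * t ^ α) :=
    (measurable_const.mul (measurable_id.pow measurable_const)).ennreal_ofReal
  have hC2 : L₁ ≤ (∫⁻ t in Set.Ioi t₁, ENNReal.ofReal (H t₁ * t ^ α)) + L₁' := by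
    rw [hL₁, hL₁', ← lintegral_add_left hmeasC]
    refine lintegral_mono fun t => ?_
    have hr : H t * t ^ α = H t₁ * t ^ α + (H t - H t₁) * t ^ α := by ring
    rw [hr]
    exact ENNReal.ofReal_add_le
  have hCiff : L₁ = ⊤ ↔ L₁' = ⊤ := by
    constructor
    · intro h
      have h2 : (∫⁻ t in Set.Ioi t₁, ENNReal.ofReal (H t₁ * t ^ α)) + L₁' = ⊤ :=
        eq_top_iff.mpr (h ▸ hC2)
      rcases ENNReal.add_eq_top.mp h2 with h' | h'
      · exact absurd h' hCfin
      · exact h'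
    · intro h
      exact eq_top_iff.mpr (h ▸ hC1)
  -- Step D
  set S : Set (ℝ × ℝ) := {q : ℝ × ℝ | g q.2 ≤ q.1} with hSdef
  have hS : MeasurableSet S := measurableSet_le (hg_meas.comp measurable_snd) measurable_fst
  set Φ : ℝ × ℝ → ENNReal := S.indicator (fun q => ENNReal.ofReal (q.1 ^ α)) with hΦdef
  have hΦmeas : Measurable Φ :=
    ((measurable_fst.pow measurable_const).ennreal_ofReal).indicator hS
  have claim1 : ∀ t ∈ Set.Ioi t₁, ENNReal.ofReal ((H t - H t₁) * t ^ α)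
      = ∫⁻ τ in Set.Ioi (H t₁), Φ (t, τ) := by
    intro t ht
    have ht' : t₁ < t := mem_Ioi.mp ht
    have htm : t ∈ Set.Ici t₀ := (hHmem t ht'.le).1
    have hfun : (fun τ => Φ (t, τ))
        = fun τ => ({τ : ℝ | g τ ≤ t}).indicator (fun _ => ENNReal.ofReal (t ^ α)) τ := by
      funext τ
      by_cases h : g τ ≤ t
      · simp [hΦdef, hSdef, Set.indicator_apply, h]
      · simp [hΦdef, hSdef, Set.indicator_apply, h]
    rw [hfun]
    have hsm : MeasurableSet {τ : ℝ | g τ ≤ t} := measurableSet_le hg_meas measurable_const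
    rw [lintegral_indicator_const hsm, Measure.restrict_apply hsm]
    have hseteq : {τ : ℝ | g τ ≤ t} ∩ Set.Ioi (H t₁) = Set.Ioc (H t₁) (H t) := by
      ext τ
      simp only [Set.mem_inter_iff, Set.mem_setOf_eq, Set.mem_Ioi, Set.mem_Ioc]
      constructor
      · rintro ⟨h1, h2⟩
        exact ⟨h2, (hg_le_iff τ t h2 htm).mp h1⟩
      · rintro ⟨h1, h2⟩
        exact ⟨(hg_le_iff τ t h1 htm).mpr h2, h1⟩
    rw [hseteq, Real.volume_Ioc, ← ENNReal.ofReal_mul (Real.rpow_nonneg (by linarith) _)]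
    ring_nf
  have hD1 : L₁' = ∫⁻ t in Set.Ioi t₁, ∫⁻ τ in Set.Ioi (H t₁), Φ (t, τ) := by
    rw [hL₁']
    refine lintegral_congr_ae ?_
    filter_upwards [ae_restrict_mem measurableSet_Ioi] with t ht
    exact claim1 t ht
  have hswap : (∫⁻ t in Set.Ioi t₁, ∫⁻ τ in Set.Ioi (H t₁), Φ (t, τ))
      = ∫⁻ τ in Set.Ioi (H t₁), ∫⁻ t in Set.Ioi t₁, Φ (t, τ) :=
    lintegral_lintegral_swap hΦmeas.aemeasurable
  have claim2 : ∀ τ ∈ Set.Ioi (H t₁),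
      (∫⁻ t in Set.Ioi t₁, Φ (t, τ))
        = ENNReal.ofReal (Hinv τ ^ β) * ENNReal.ofReal ((n:ℝ) - 1) := by
    intro τ hτ
    have hτ' : H t₁ < τ := mem_Ioi.mp hτ
    have hc1 : t₁ < g τ := hg_gt τ hτ'
    have hc0 : (0:ℝ) < g τ := lt_trans ht₁0 hc1
    have hfun : (fun t => Φ (t, τ))
        = fun t => (Set.Ici (g τ)).indicator (fun t => ENNReal.ofReal (t ^ α)) t := by
      funext t
      by_cases h : g τ ≤ t
      · simp [hΦdef, hSdef, Set.indicator_apply, h, Set.mem_Ici]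
      · simp [hΦdef, hSdef, Set.indicator_apply, h, Set.mem_Ici]
    rw [hfun, lintegral_indicator measurableSet_Ici,
      Measure.restrict_restrict measurableSet_Ici,
      Set.inter_eq_self_of_subset_left
        (fun t (htt : t ∈ Set.Ici (g τ)) => mem_Ioi.mpr (lt_of_lt_of_le hc1 htt)),
      ← setLIntegral_congr (Ioi_ae_eq_Ici (a := g τ)),
      ← ofReal_integral_eq_lintegral_ofReal (integrableOn_Ioi_rpow_of_lt hα hc0) (by
        filter_upwards [ae_restrict_mem measurableSet_Ioi] with t htt
        exact Real.rpow_nonneg (le_of_lt (lt_trans hc0 (mem_Ioi.mp htt))) _),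
      integral_Ioi_rpow_of_lt hα hc0, hαβ, ← hg_eq τ hτ'.le,
      ← ENNReal.ofReal_mul (Real.rpow_nonneg hc0.le _)]
    congr 1
    rw [hβdef]
    field_simp
  have hD2 : (∫⁻ τ in Set.Ioi (H t₁), ∫⁻ t in Set.Ioi t₁, Φ (t, τ))
      = L₂ * ENNReal.ofReal ((n:ℝ) - 1) := by
    have haem : AEMeasurable (fun τ => ENNReal.ofReal (Hinv τ ^ β))
        (volume.restrict (Set.Ioi (H t₁))) := by
      have hgm2 : Measurable fun τ => ENNReal.ofReal (g τ ^ β) :=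
        (hg_meas.pow measurable_const).ennreal_ofReal
      refine hgm2.aemeasurable.congr ?_
      rw [Filter.EventuallyEq, ae_restrict_iff' measurableSet_Ioi]
      exact ae_of_all _ fun τ hτ => by rw [hg_eq τ (mem_Ioi.mp hτ).le]
    rw [hL₂, ← lintegral_mul_const'' _ haem]
    refine lintegral_congr_ae ?_
    filter_upwards [ae_restrict_mem measurableSet_Ioi] with τ hτ
    exact claim2 τ hτ
  have hD : L₁' = L₂ * ENNReal.ofReal ((n:ℝ) - 1) := by rw [hD1, hswap, hD2]
  rw [hCiff, hD]
  have hc0' : ENNReal.ofReal ((n:ℝ) - 1) ≠ 0 := by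
    simp only [ne_eq, ENNReal.ofReal_eq_zero, not_le]
    linarith
  constructor
  · intro h
    rcases ENNReal.mul_eq_top.mp h with ⟨-, h2⟩ | ⟨h1, -⟩
    · exact absurd h2 ENNReal.ofReal_ne_top
    · exact h1
  · intro h
    rw [h]
    exact ENNReal.top_mul hc0'

end

theorem divergence_type_iff (n : ℕ) (hn : 2 ≤ n)
    (H : ℝ → ℝ) (t₀ : ℝ) (hH : DominatingFactor H t₀)
    (Hinv : ℝ → ℝ)
    (hinv₁ : ∀ t ∈ Set.Ici t₀, Hinv (H t) = t)
    (hinv₂ : ∀ τ ∈ Set.Ici (H t₀), Hinv τ ∈ Set.Ici t₀ ∧ H (Hinv τ) = τ)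
    (t₁ : ℝ) (ht₁ : max t₀ 1 ≤ t₁) :
    Tendsto (fun T => ∫ t in t₁..T, H t * t ^ (-(n : ℝ) / ((n : ℝ) - 1)))
        atTop atTop ↔
    Tendsto (fun T => ∫ τ in (H t₁)..T, (Hinv τ) ^ (-1 / ((n : ℝ) - 1)))
        atTop atTop := by
  obtain ⟨ht₀0, hcont, hmono, -, -⟩ := hH
  have ht₀1 : t₀ ≤ t₁ := le_trans (le_max_left _ _) ht₁
  have ht11 : (1:ℝ) ≤ t₁ := le_trans (le_max_right _ _) ht₁
  have hk : (1:ℝ) ≤ (n:ℝ) - 1 := by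
    have h2 : (2:ℝ) ≤ (n:ℝ) := by exact_mod_cast hn
    linarith
  have hβ0 : -1 / ((n:ℝ) - 1) ≤ 0 := by
    apply div_nonpos_of_nonpos_of_nonneg <;> linarith
  have hτ₂gt : H t₁ < max (H t₁) 1 + 1 :=
    lt_of_le_of_lt (le_max_left _ _) (lt_add_of_pos_right _ one_pos)
  have haux := hinv_aux hmono ht₀1 hinv₂ hτ₂gt.le
  set t₂ := Hinv (max (H t₁) 1 + 1) with ht₂def
  have ht₁2 : t₁ ≤ t₂ := haux.1
  have hHt₂ : H t₂ = max (H t₁) 1 + 1 := haux.2.2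
  have h1t₂ : 1 ≤ H t₂ := by
    rw [hHt₂]; linarith [le_max_right (H t₁) 1]
  have hHle : H t₁ ≤ H t₂ := by
    rw [hHt₂]; linarith [le_max_left (H t₁) 1]
  have e1 := tendsto_intInt_shift ht₁2
    (fun T => integrableOn_Hmul hcont ht₀1 ht11 (-(n : ℝ) / ((n : ℝ) - 1)) T)
  have e2 := tendsto_intInt_shift hHle
    (fun T => integrableOn_HinvRpow hmono ht₀1 ht11 hinv₂ hβ0 T)
  have e3 := key_iff n hn H t₀ hcont hmono Hinv hinv₂ t₂
    (le_trans ht₀1 ht₁2) (le_trans ht11 ht₁2) h1t₂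
  exact e1.trans (e3.trans e2.symm)
end

section
/- Let n ≥ 2, let t ∈ ∂Hⁿ (i.e. tₙ = 0), let 0 < r < R < ∞, and let g : Hⁿ → [0,∞) be measurable and integrable on S(t; 0, R). Define ω(s) = (2/(Ωₙ sⁿ)) ∫_{S(t;0,s)} (g(x) − 1) dmₙ(x) for 0 < s ≤ R and P = (2/(ωₙ₋₁ log(R/r))) ∫_{S(t;r,R)} g(x)/|x − t|ⁿ dmₙ(x). Then (P − 1)·log(R/r) = (ω(R) − ω(r))/n + ∫_r^R ω(s)/s ds. -/
open MeasureTheory Metric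

open Set

variable {n : ℕ}

/-- The half annulus centered at the origin. -/
def halfAnn (n : ℕ) (i : Fin n) (r R : ℝ) : Set (EuclideanSpace ℝ (Fin n)) :=
  {x | 0 < x i ∧ r ≤ ‖x‖ ∧ ‖x‖ ≤ R}

lemma measurable_eval (i : Fin n) : Measurable fun x : EuclideanSpace ℝ (Fin n) => x i :=
  (EuclideanSpace.proj (𝕜 := ℝ) i).continuous.measurable

lemma measurableSet_halfAnn (i : Fin n) (r R : ℝ) : MeasurableSet (halfAnn n i r R) := by
  have h1 : MeasurableSet {x : EuclideanSpace ℝ (Fin n) | 0 < x i} :=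
    measurableSet_lt measurable_const (measurable_eval i)
  have h2 : MeasurableSet {x : EuclideanSpace ℝ (Fin n) | r ≤ ‖x‖ ∧ ‖x‖ ≤ R} := by
    have : {x : EuclideanSpace ℝ (Fin n) | r ≤ ‖x‖ ∧ ‖x‖ ≤ R} = (‖·‖) ⁻¹' Icc r R := rfl
    rw [this]
    exact measurableSet_Icc.preimage measurable_norm
  have : halfAnn n i r R = {x | 0 < x i} ∩ {x : EuclideanSpace ℝ (Fin n) | r ≤ ‖x‖ ∧ ‖x‖ ≤ R} := by
    ext x; simp [halfAnn, and_assoc]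
  rw [this]; exact h1.inter h2

lemma halfAnn_subset (i : Fin n) {r r' R R' : ℝ} (h1 : r' ≤ r) (h2 : R ≤ R') :
    halfAnn n i r R ⊆ halfAnn n i r' R' := fun x hx =>
  ⟨hx.1, h1.trans hx.2.1, hx.2.2.trans h2⟩

lemma hyperplane_null (i : Fin n) :
    (volume : Measure (EuclideanSpace ℝ (Fin n))) {x | x i = 0} = 0 := by
  have hn' : Nonempty (Fin n) := ⟨i⟩
  set l : EuclideanSpace ℝ (Fin n) →ₗ[ℝ] ℝ := (EuclideanSpace.proj (𝕜 := ℝ) i).toLinearMap with hl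
  have : {x : EuclideanSpace ℝ (Fin n) | x i = 0} = (LinearMap.ker l : Set _) := by
    ext x; simp [hl, LinearMap.mem_ker]
  rw [this]
  apply MeasureTheory.Measure.addHaar_submodule
  intro htop
  have : (EuclideanSpace.single i (1:ℝ)) ∈ LinearMap.ker l := htop ▸ Submodule.mem_top
  simp [hl, LinearMap.mem_ker] at this


/-- Reflection negating the `i`-th coordinate, as a linear isometry equivalence. -/
noncomputable def reflMap (n : ℕ) (i : Fin n) :
    EuclideanSpace ℝ (Fin n) ≃ₗᵢ[ℝ] EuclideanSpace ℝ (Fin n) :=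
  LinearIsometryEquiv.piLpCongrRight 2
    (fun j => if j = i then LinearIsometryEquiv.neg ℝ else LinearIsometryEquiv.refl ℝ ℝ)

lemma reflMap_apply (i : Fin n) (x : EuclideanSpace ℝ (Fin n)) (j : Fin n) :
    reflMap n i x j = if j = i then -(x j) else x j := by
  rw [reflMap, LinearIsometryEquiv.piLpCongrRight_apply]
  by_cases h : j = i
  · subst h; simp
  · simp [h]

lemma half_integral (i : Fin n) (φ : ℝ → ℝ)
    (hφ : Integrable (fun x : EuclideanSpace ℝ (Fin n) => φ ‖x‖)) :
    ∫ x in {x : EuclideanSpace ℝ (Fin n) | 0 < x i}, φ ‖x‖ =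
      (1 / 2) * ∫ x : EuclideanSpace ℝ (Fin n), φ ‖x‖ := by
  set T := reflMap n i with hT
  have hTi : ∀ x : EuclideanSpace ℝ (Fin n), T x i = -(x i) := by
    intro x; rw [hT, reflMap_apply]; simp
  have hmp : MeasurePreserving T volume volume := T.measurePreserving
  have hemb : MeasurableEmbedding T :=
    T.toHomeomorph.toMeasurableEquiv.measurableEmbedding
  have hs : MeasurableSet {x : EuclideanSpace ℝ (Fin n) | 0 < x i} :=
    measurableSet_lt measurable_const (measurable_eval i)
  have hneg : ∫ x in {x : EuclideanSpace ℝ (Fin n) | x i < 0}, φ ‖x‖ =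
      ∫ x in {x : EuclideanSpace ℝ (Fin n) | 0 < x i}, φ ‖x‖ := by
    have hpre : T ⁻¹' {x : EuclideanSpace ℝ (Fin n) | 0 < x i} =
        {x : EuclideanSpace ℝ (Fin n) | x i < 0} := by
      ext x
      simp only [Set.mem_preimage, Set.mem_setOf_eq, hTi, neg_pos]
    calc ∫ x in {x : EuclideanSpace ℝ (Fin n) | x i < 0}, φ ‖x‖
        = ∫ x in T ⁻¹' {x : EuclideanSpace ℝ (Fin n) | 0 < x i}, φ ‖T x‖ := by
          rw [hpre]
          apply setIntegral_congr_fun (by rw [← hpre]; exact hmp.measurable hs)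
          intro x _
          show φ ‖x‖ = φ ‖T x‖
          rw [T.norm_map]
      _ = ∫ x in {x : EuclideanSpace ℝ (Fin n) | 0 < x i}, φ ‖x‖ :=
          hmp.setIntegral_preimage_emb hemb (fun y => φ ‖y‖) _
  have hcompl : ∫ x in {x : EuclideanSpace ℝ (Fin n) | 0 < x i}ᶜ, φ ‖x‖ =
      ∫ x in {x : EuclideanSpace ℝ (Fin n) | x i < 0}, φ ‖x‖ := by
    apply setIntegral_congr_set
    have h1 : {x : EuclideanSpace ℝ (Fin n) | 0 < x i}ᶜ =
        {x : EuclideanSpace ℝ (Fin n) | x i < 0} ∪ {x : EuclideanSpace ℝ (Fin n) | x i = 0} := by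
      ext x; simp only [Set.mem_compl_iff, Set.mem_setOf_eq, Set.mem_union, not_lt]
      constructor
      · intro h; exact h.lt_or_eq
      · rintro (h | h) <;> linarith
    rw [h1]
    exact MeasureTheory.union_ae_eq_left_of_ae_eq_empty (ae_eq_empty.2 (hyperplane_null i))
  have htot := MeasureTheory.integral_add_compl hs hφ
  rw [hcompl, hneg] at htot
  linarith

lemma norm_ann_measurable (r R : ℝ) :
    MeasurableSet {x : EuclideanSpace ℝ (Fin n) | ‖x‖ ∈ Icc r R} :=
  measurableSet_Icc.preimage measurable_norm

lemma radial_indicator_integrable (hn : 1 ≤ n) {r R : ℝ} (hr : 0 < r) :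
    Integrable (fun x : EuclideanSpace ℝ (Fin n) =>
      ({x : EuclideanSpace ℝ (Fin n) | ‖x‖ ∈ Icc r R}.indicator
        (fun x => (‖x‖ ^ n)⁻¹) x)) := by
  rw [integrable_indicator_iff (norm_ann_measurable r R)]
  apply Measure.integrableOn_of_bounded (M := (r ^ n)⁻¹)
  · exact ((measure_mono (fun x hx => mem_closedBall_zero_iff.2 hx.2)).trans_lt
      (measure_closedBall_lt_top (x := (0 : EuclideanSpace ℝ (Fin n))) (r := R))).ne
  · exact ((measurable_norm.pow_const n).inv).aestronglyMeasurable
  · apply MeasureTheory.ae_restrict_of_forall_mem (norm_ann_measurable r R)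
    intro x hx
    rw [Real.norm_eq_abs, abs_of_nonneg (by positivity)]
    apply inv_anti₀ (by positivity)
    exact pow_le_pow_left₀ hr.le hx.1 n

lemma radial_int (hn : 2 ≤ n) (i : Fin n) {r R : ℝ} (hr : 0 < r) (hR : r < R) :
    ∫ x in halfAnn n i r R, (‖x‖ ^ n)⁻¹ =
      (n : ℝ) * (volume (ball (0 : EuclideanSpace ℝ (Fin n)) 1)).toReal
        * Real.log (R / r) / 2 := by
  haveI : Nonempty (Fin n) := ⟨i⟩
  set S := {x : EuclideanSpace ℝ (Fin n) | ‖x‖ ∈ Icc r R} with hS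
  set φ : ℝ → ℝ := (Icc r R).indicator (fun ρ => (ρ ^ n)⁻¹) with hφ
  have hφx : ∀ x : EuclideanSpace ℝ (Fin n),
      φ ‖x‖ = S.indicator (fun x => (‖x‖ ^ n)⁻¹) x := by
    intro x
    simp only [hφ, hS, Set.indicator_apply, Set.mem_setOf_eq]
  have hint : Integrable (fun x : EuclideanSpace ℝ (Fin n) => φ ‖x‖) := by
    simp only [hφx]
    exact radial_indicator_integrable (by omega) hr
  have step2 : ∫ x in halfAnn n i r R, (‖x‖ ^ n)⁻¹ =
      ∫ x in {x : EuclideanSpace ℝ (Fin n) | 0 < x i}, φ ‖x‖ := by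
    simp only [hφx]
    rw [setIntegral_indicator (norm_ann_measurable r R)]
    congr 1
  rw [step2, half_integral i φ hint]
  rw [MeasureTheory.integral_fun_norm_addHaar volume φ]
  have hdim : Module.finrank ℝ (EuclideanSpace ℝ (Fin n)) = n := finrank_euclideanSpace_fin
  rw [hdim]
  have step5 : ∫ y in Ioi (0:ℝ), y ^ (n - 1) • φ y = Real.log (R / r) := by
    have h1 : ∀ y : ℝ, y ^ (n-1) • φ y =
        (Icc r R).indicator (fun y => y ^ (n-1) * (y ^ n)⁻¹) y := by
      intro y
      rw [hφ, smul_eq_mul, ← Set.indicator_const_mul]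
      rfl
    simp only [h1]
    rw [setIntegral_indicator measurableSet_Icc]
    have hints : Ioi (0:ℝ) ∩ Icc r R = Icc r R :=
      Set.inter_eq_self_of_subset_right (fun y (hy : y ∈ Icc r R) => lt_of_lt_of_le hr hy.1)
    rw [hints]
    have h2 : ∫ y in Icc r R, y ^ (n-1) * (y ^ n)⁻¹ = ∫ y in Icc r R, y⁻¹ := by
      apply setIntegral_congr_fun measurableSet_Icc
      intro y hy
      have hy0 : (0:ℝ) < y := lt_of_lt_of_le hr hy.1
      have : y ^ n = y ^ (n-1) * y := by
        rw [← pow_succ]; congr 1; omega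
      show y ^ (n - 1) * (y ^ n)⁻¹ = y⁻¹
      rw [this]
      field_simp
    rw [h2, MeasureTheory.integral_Icc_eq_integral_Ioc,
      ← intervalIntegral.integral_of_le hR.le,
      integral_inv (notMem_uIcc_of_lt hr (hr.trans hR))]
  rw [step5]
  simp only [nsmul_eq_mul, smul_eq_mul]
  simp only [Measure.real]
  ring

lemma int_pow_inv (hn : 1 ≤ n) {a b : ℝ} (ha : 0 < a) (hab : a ≤ b) :
    ∫ s in a..b, (s ^ (n + 1))⁻¹ = ((a ^ n)⁻¹ - (b ^ n)⁻¹) / n := by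
  have hz : ∀ s : ℝ, (s ^ (n + 1))⁻¹ = s ^ (-(n + 1 : ℕ) : ℤ) := fun s => by
    rw [zpow_neg, zpow_natCast]
  simp only [hz]
  rw [integral_zpow (Or.inr ⟨by omega, notMem_uIcc_of_lt ha (ha.trans_le hab)⟩)]
  have h1 : (-(n + 1 : ℕ) : ℤ) + 1 = -(n : ℤ) := by push_cast; ring
  rw [h1]
  have hb : (0:ℝ) < b := ha.trans_le hab
  rw [zpow_neg, zpow_neg, zpow_natCast, zpow_natCast]
  have hn0 : ((n : ℝ)) ≠ 0 := by positivity
  push_cast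
  field_simp
  ring_nf
  simp only [mul_inv_cancel_right₀ hn0]

lemma ae_eq_of_sandwich {α : Type*} [MeasurableSpace α] {μ : Measure α} {s t u : Set α}
    (hst : s ⊆ t) (htu : t \ s ⊆ u) (hu : μ u = 0) : s =ᵐ[μ] t := by
  rw [MeasureTheory.ae_eq_set]
  constructor
  · exact measure_mono_null (fun x hx => absurd (hst hx.1) hx.2) hu
  · exact measure_mono_null htu hu

lemma sphere_null (hn : 2 ≤ n) {ρ : ℝ} (hρ : ρ ≠ 0) :
    (volume : Measure (EuclideanSpace ℝ (Fin n))) (Metric.sphere 0 ρ) = 0 :=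
  Measure.addHaar_sphere_of_ne_zero volume (0 : EuclideanSpace ℝ (Fin n)) hρ

lemma F_split (hn : 2 ≤ n) (i : Fin n) {r s R : ℝ} (hr : 0 < r) (hrs : r ≤ s) (hsR : s ≤ R)
    (h : EuclideanSpace ℝ (Fin n) → ℝ) (hi : IntegrableOn h (halfAnn n i 0 R)) :
    ∫ x in halfAnn n i 0 s, h x =
      (∫ x in halfAnn n i 0 r, h x) + ∫ x in halfAnn n i r s, h x := by
  set D : Set (EuclideanSpace ℝ (Fin n)) := {x | 0 < x i ∧ r < ‖x‖ ∧ ‖x‖ ≤ s} with hD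
  have hDm : MeasurableSet D := by
    have : D = {x : EuclideanSpace ℝ (Fin n) | 0 < x i} ∩ (‖·‖) ⁻¹' Ioc r s := by
      ext x; simp only [hD, Set.mem_setOf_eq, Set.mem_inter_iff, Set.mem_preimage,
        Set.mem_Ioc, and_assoc]
    rw [this]
    exact (measurableSet_lt measurable_const (measurable_eval i)).inter
      (measurableSet_Ioc.preimage measurable_norm)
  have hunion : halfAnn n i 0 s = halfAnn n i 0 r ∪ D := by
    ext x
    simp only [halfAnn, hD, Set.mem_setOf_eq, Set.mem_union]
    constructor
    · rintro ⟨h1, _, h3⟩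
      rcases le_or_gt ‖x‖ r with hc | hc
      · exact Or.inl ⟨h1, norm_nonneg x, hc⟩
      · exact Or.inr ⟨h1, hc, h3⟩
    · rintro (⟨h1, h2, h3⟩ | ⟨h1, h2, h3⟩)
      · exact ⟨h1, norm_nonneg x, h3.trans hrs⟩
      · exact ⟨h1, norm_nonneg x, h3⟩
  have hdisj : Disjoint (halfAnn n i 0 r) D := by
    rw [Set.disjoint_left]
    rintro x ⟨_, _, h3⟩ ⟨_, h2, _⟩
    exact absurd h3 (not_le.2 h2)
  rw [hunion, setIntegral_union hdisj hDm
    (hi.mono_set (halfAnn_subset i le_rfl (hrs.trans hsR)))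
    (hi.mono_set ?_)]
  · congr 1
    apply setIntegral_congr_set
    have hsub : D ⊆ halfAnn n i r s := fun x hx => ⟨hx.1, hx.2.1.le, hx.2.2⟩
    apply ae_eq_of_sandwich hsub
      (u := Metric.sphere (0 : EuclideanSpace ℝ (Fin n)) r) ?_ (sphere_null hn hr.ne')
    rintro x ⟨⟨h1, h2, h3⟩, hx⟩
    simp only [hD, Set.mem_setOf_eq, not_and] at hx
    have : ¬ (r < ‖x‖) := fun hc => hx h1 hc h3
    simp only [mem_sphere_iff_norm, sub_zero]
    linarith [not_lt.1 this, h2]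
  · intro x hx
    exact ⟨hx.1, norm_nonneg x, hx.2.2.trans hsR⟩

lemma fubini_ann (hn : 2 ≤ n) (i : Fin n) {r R : ℝ} (hr : 0 < r) (hR : r < R)
    (h : EuclideanSpace ℝ (Fin n) → ℝ) (hm : Measurable h)
    (hi : IntegrableOn h (halfAnn n i r R)) :
    ((∫ x in halfAnn n i r R, h x * (‖x‖ ^ n)⁻¹) =
      (R ^ n)⁻¹ * (∫ x in halfAnn n i r R, h x) +
        n * ∫ s in Ioc r R, (s ^ (n + 1))⁻¹ * (∫ x in halfAnn n i r s, h x))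
    ∧ IntegrableOn (fun s => (s ^ (n + 1))⁻¹ * (∫ x in halfAnn n i r s, h x)) (Ioc r R) := by
  set A := halfAnn n i r R with hA
  have hAm : MeasurableSet A := measurableSet_halfAnn i r R
  set W : Set (EuclideanSpace ℝ (Fin n) × ℝ) := {q | ‖q.1‖ < q.2 ∧ q.2 ≤ R} with hW
  have hWm : MeasurableSet W :=
    (measurableSet_lt (measurable_fst.norm) measurable_snd).inter
      (measurableSet_le measurable_snd measurable_const)
  set F2 : EuclideanSpace ℝ (Fin n) × ℝ → ℝ :=
    fun p => A.indicator h p.1 * W.indicator (fun q => (q.2 ^ (n + 1))⁻¹) p with hF2def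
  have hF2eval : ∀ (x : EuclideanSpace ℝ (Fin n)) (s : ℝ), F2 (x, s) =
      A.indicator h x * W.indicator (fun q => (q.2 ^ (n + 1))⁻¹) (x, s) := fun x s => rfl
  have hF2m : Measurable F2 := by
    apply Measurable.mul
    · exact (hm.indicator hAm).comp measurable_fst
    · exact ((measurable_snd.pow_const (n + 1)).inv).indicator hWm
  -- integrability on the product
  have hBint : Integrable (fun p : EuclideanSpace ℝ (Fin n) × ℝ =>
      (A.indicator (fun x => |h x|) p.1) * ((Ioc r R).indicator (fun _ => (r ^ (n + 1))⁻¹) p.2))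
      (volume.prod volume) := by
    apply Integrable.mul_prod
    · exact (integrable_indicator_iff hAm).2 hi.abs
    · exact (integrable_indicator_iff measurableSet_Ioc).2 (integrableOn_const (by
        rw [Real.volume_Ioc]; exact ENNReal.ofReal_lt_top.ne))
  have hF2int : Integrable F2 (volume.prod volume) := by
    apply hBint.mono' hF2m.aestronglyMeasurable
    apply Filter.Eventually.of_forall
    rintro ⟨x, s⟩
    rw [hF2eval]
    by_cases hx : x ∈ A
    · by_cases hxs : (x, s) ∈ W
      · have hsIoc : s ∈ Ioc r R := ⟨lt_of_le_of_lt hx.2.1 hxs.1, hxs.2⟩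
        rw [Set.indicator_of_mem hx, Set.indicator_of_mem hxs]
        show |h x * (s ^ (n+1))⁻¹| ≤ _ * (Ioc r R).indicator _ s
        rw [Set.indicator_of_mem hx, Set.indicator_of_mem hsIoc, abs_mul]
        have hs0 : (0:ℝ) < s := hr.trans hsIoc.1
        apply mul_le_mul le_rfl ?_ (abs_nonneg _) (abs_nonneg _)
        rw [abs_of_nonneg (by positivity)]
        apply inv_anti₀ (by positivity)
        exact pow_le_pow_left₀ hr.le (hx.2.1.trans hxs.1.le) _
      · rw [Set.indicator_of_notMem hxs, mul_zero, norm_zero]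
        apply mul_nonneg ?_ ?_
        · exact Set.indicator_nonneg (fun y _ => abs_nonneg _) _
        · exact Set.indicator_nonneg (fun y _ => by positivity) _
    · rw [Set.indicator_of_notMem hx, zero_mul, norm_zero]
      apply mul_nonneg ?_ ?_
      · exact Set.indicator_nonneg (fun y _ => abs_nonneg _) _
      · exact Set.indicator_nonneg (fun y _ => by positivity) _
  have hswap := MeasureTheory.integral_integral_swap (f := fun x s => F2 (x, s))
    (by simpa only [Function.uncurry_def] using hF2int)
  have hnR : (0:ℝ) < n := by positivity
  -- the x-then-s side
  have hLx : ∀ x : EuclideanSpace ℝ (Fin n), (∫ s : ℝ, F2 (x, s)) =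
      A.indicator (fun x => h x * (((‖x‖ ^ n)⁻¹ - (R ^ n)⁻¹) / n)) x := by
    intro x
    by_cases hx : x ∈ A
    · rw [Set.indicator_of_mem hx]
      have hpt : ∀ s : ℝ, F2 (x, s) =
          h x * (Ioc ‖x‖ R).indicator (fun s => (s ^ (n + 1))⁻¹) s := by
        intro s
        rw [hF2eval, Set.indicator_of_mem hx]
        congr 1
      simp only [hpt]
      rw [integral_const_mul, integral_indicator measurableSet_Ioc,
        ← intervalIntegral.integral_of_le hx.2.2,
        int_pow_inv (by omega) (hr.trans_le hx.2.1) hx.2.2]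
    · rw [Set.indicator_of_notMem hx]
      have hpt : ∀ s : ℝ, F2 (x, s) = 0 := fun s => by
        rw [hF2eval, Set.indicator_of_notMem hx, zero_mul]
      simp only [hpt, integral_zero]
  -- integrability of h x * (‖x‖^n)⁻¹ on A
  have hInv : IntegrableOn (fun x : EuclideanSpace ℝ (Fin n) => h x * (‖x‖ ^ n)⁻¹) A := by
    apply Integrable.mono' (g := fun x => |h x| * (r ^ n)⁻¹)
    · exact hi.abs.mul_const _
    · exact ((hm.mul ((measurable_norm.pow_const n).inv)).aestronglyMeasurable).restrict
    · apply MeasureTheory.ae_restrict_of_forall_mem hAm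
      intro x hx
      rw [Real.norm_eq_abs, abs_mul]
      apply mul_le_mul le_rfl ?_ (abs_nonneg _) (abs_nonneg _)
      rw [abs_of_nonneg (by positivity)]
      exact inv_anti₀ (by positivity) (pow_le_pow_left₀ hr.le hx.2.1 n)
  have hLHS : (∫ x : EuclideanSpace ℝ (Fin n), ∫ s : ℝ, F2 (x, s)) =
      (1 / n) * (∫ x in A, h x * (‖x‖ ^ n)⁻¹) - ((R ^ n)⁻¹ / n) * ∫ x in A, h x := by
    rw [funext hLx, integral_indicator hAm]
    have hexp : ∀ x : EuclideanSpace ℝ (Fin n), h x * (((‖x‖ ^ n)⁻¹ - (R ^ n)⁻¹) / n) =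
        (1 / n) * (h x * (‖x‖ ^ n)⁻¹) - ((R ^ n)⁻¹ / n) * h x := by
      intro x; ring
    simp only [hexp]
    rw [integral_sub ((hInv.const_mul _)) ((hi.const_mul _)),
      integral_const_mul, integral_const_mul]
  -- the s-then-x side
  have hRs : ∀ s : ℝ, (∫ x : EuclideanSpace ℝ (Fin n), F2 (x, s)) =
      (Ioc r R).indicator (fun s => (s ^ (n + 1))⁻¹ * ∫ x in halfAnn n i r s, h x) s := by
    intro s
    by_cases hs : s ∈ Ioc r R
    · rw [Set.indicator_of_mem hs]
      have hpt : ∀ x : EuclideanSpace ℝ (Fin n), F2 (x, s) =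
          (s ^ (n + 1))⁻¹ * (A ∩ {x : EuclideanSpace ℝ (Fin n) | ‖x‖ < s}).indicator h x := by
        intro x
        rw [hF2eval]
        by_cases hx : x ∈ A
        · by_cases hxs : ‖x‖ < s
          · rw [Set.indicator_of_mem hx, Set.indicator_of_mem (show (x, s) ∈ W from ⟨hxs, hs.2⟩),
              Set.indicator_of_mem (show x ∈ _ ∩ _ from ⟨hx, hxs⟩)]
            ring
          · rw [Set.indicator_of_notMem (show (x, s) ∉ W from fun hc => hxs hc.1), mul_zero,
              Set.indicator_of_notMem (fun hc : x ∈ A ∩ {x : EuclideanSpace ℝ (Fin n) | ‖x‖ < s} => hxs hc.2), mul_zero]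
        · rw [Set.indicator_of_notMem hx, zero_mul,
            Set.indicator_of_notMem (fun hc : x ∈ A ∩ {x : EuclideanSpace ℝ (Fin n) | ‖x‖ < s} => hx hc.1), mul_zero]
      simp only [hpt]
      rw [integral_const_mul,
        integral_indicator (hAm.inter (measurableSet_lt measurable_norm measurable_const))]
      congr 1
      apply setIntegral_congr_set
      have hsub : A ∩ {x : EuclideanSpace ℝ (Fin n) | ‖x‖ < s} ⊆ halfAnn n i r s :=
        fun x hx => ⟨hx.1.1, hx.1.2.1, hx.2.le⟩
      apply ae_eq_of_sandwich hsub (u := Metric.sphere (0 : EuclideanSpace ℝ (Fin n)) s) ?_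
        (sphere_null hn (hr.trans hs.1).ne')
      rintro x ⟨⟨h1, h2, h3⟩, hx⟩
      have hxA : x ∈ A := ⟨h1, h2, h3.trans hs.2⟩
      have hns : ¬ ‖x‖ < s := fun hc => hx ⟨hxA, hc⟩
      simp only [mem_sphere_iff_norm, sub_zero]
      linarith [not_lt.1 hns, h3]
    · rw [Set.indicator_of_notMem hs]
      have hpt : ∀ x : EuclideanSpace ℝ (Fin n), F2 (x, s) = 0 := by
        intro x
        rw [hF2eval]
        by_cases hx : x ∈ A
        · rw [Set.indicator_of_notMem
            (show (x, s) ∉ W from fun hc => hs ⟨lt_of_le_of_lt hx.2.1 hc.1, hc.2⟩), mul_zero]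
        · rw [Set.indicator_of_notMem hx, zero_mul]
      simp only [hpt, integral_zero]
  have hRHS : (∫ s : ℝ, ∫ x : EuclideanSpace ℝ (Fin n), F2 (x, s)) =
      ∫ s in Ioc r R, (s ^ (n + 1))⁻¹ * ∫ x in halfAnn n i r s, h x := by
    rw [funext hRs, integral_indicator measurableSet_Ioc]
  have hIntOut : IntegrableOn
      (fun s => (s ^ (n + 1))⁻¹ * ∫ x in halfAnn n i r s, h x) (Ioc r R) := by
    have h2 := hF2int.integral_prod_right
    have h3 : (fun s : ℝ => ∫ x : EuclideanSpace ℝ (Fin n), F2 (x, s)) =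
        (Ioc r R).indicator (fun s => (s ^ (n + 1))⁻¹ * ∫ x in halfAnn n i r s, h x) :=
      funext hRs
    rw [h3] at h2
    rwa [integrable_indicator_iff measurableSet_Ioc] at h2
  refine ⟨?_, hIntOut⟩
  rw [hLHS, hRHS] at hswap
  have hn0 : (n : ℝ) ≠ 0 := hnR.ne'
  have h5 : (n:ℝ) * (∫ s in Ioc r R, (s ^ (n + 1))⁻¹ * ∫ x in halfAnn n i r s, h x) =
      (∫ x in A, h x * (‖x‖ ^ n)⁻¹) - (R ^ n)⁻¹ * ∫ x in A, h x := by
    rw [← hswap, mul_sub]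
    congr 1
    · field_simp
    · rw [← mul_assoc]
      congr 1
      field_simp
  linarith [h5]

/-- The semiring `S(x₀; r, R) = {x ∈ Hⁿ : r ≤ |x − x₀| ≤ R}` in the upper half
space `Hⁿ = {x : xₙ > 0}`, where `x₀ ∈ ∂Hⁿ`. -/
def semiring (n : ℕ) (hn : 2 ≤ n) (x₀ : EuclideanSpace ℝ (Fin n)) (r R : ℝ) :
    Set (EuclideanSpace ℝ (Fin n)) :=
  {x | 0 < x ⟨n - 1, by omega⟩ ∧ r ≤ ‖x - x₀‖ ∧ ‖x - x₀‖ ≤ R}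

lemma semiring_preimage (hn : 2 ≤ n) (t : EuclideanSpace ℝ (Fin n))
    (ht : t ⟨n - 1, by omega⟩ = 0) (a b : ℝ) :
    (fun y : EuclideanSpace ℝ (Fin n) => y + t) ⁻¹' (semiring n hn t a b) =
      halfAnn n ⟨n - 1, by omega⟩ a b := by
  ext y
  simp only [semiring, halfAnn, Set.mem_preimage, Set.mem_setOf_eq, add_sub_cancel_right]
  rw [PiLp.add_apply, ht, add_zero]

lemma translate_semiring (hn : 2 ≤ n) (t : EuclideanSpace ℝ (Fin n))
    (ht : t ⟨n - 1, by omega⟩ = 0) (a b : ℝ) (f : EuclideanSpace ℝ (Fin n) → ℝ) :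
    ∫ x in semiring n hn t a b, f x =
      ∫ y in halfAnn n ⟨n - 1, by omega⟩ a b, f (y + t) := by
  rw [← semiring_preimage hn t ht a b]
  exact ((measurePreserving_add_right volume t).setIntegral_preimage_emb
    (MeasurableEquiv.addRight t).measurableEmbedding f _).symm

lemma integrableOn_translate (hn : 2 ≤ n) (t : EuclideanSpace ℝ (Fin n))
    (ht : t ⟨n - 1, by omega⟩ = 0) (a b : ℝ) {f : EuclideanSpace ℝ (Fin n) → ℝ}
    (hf : IntegrableOn f (semiring n hn t a b)) :
    IntegrableOn (fun y => f (y + t)) (halfAnn n ⟨n - 1, by omega⟩ a b) := by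
  have := ((measurePreserving_add_right volume t).integrableOn_comp_preimage
    (MeasurableEquiv.addRight t).measurableEmbedding (f := f)
    (s := semiring n hn t a b)).2 hf
  rwa [semiring_preimage hn t ht a b] at this

lemma halfAnn_vol_lt_top (i : Fin n) {a b : ℝ} : volume (halfAnn n i a b) < ⊤ :=
  lt_of_le_of_lt (measure_mono fun x hx => mem_closedBall_zero_iff.2 hx.2.2)
    (measure_closedBall_lt_top)

lemma integrableOn_mul_invpow (i : Fin n) {r R : ℝ} (hr : 0 < r)
    {h : EuclideanSpace ℝ (Fin n) → ℝ} (hm : Measurable h)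
    (hi : IntegrableOn h (halfAnn n i r R)) :
    IntegrableOn (fun x => h x * (‖x‖ ^ n)⁻¹) (halfAnn n i r R) := by
  apply Integrable.mono' (g := fun x => |h x| * (r ^ n)⁻¹)
  · exact hi.abs.mul_const _
  · exact ((hm.mul ((measurable_norm.pow_const n).inv)).aestronglyMeasurable).restrict
  · apply MeasureTheory.ae_restrict_of_forall_mem (measurableSet_halfAnn i r R)
    intro x hx
    rw [Real.norm_eq_abs, abs_mul]
    apply mul_le_mul le_rfl ?_ (abs_nonneg _) (abs_nonneg _)
    rw [abs_of_nonneg (by positivity)]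
    exact inv_anti₀ (by positivity) (pow_le_pow_left₀ hr.le hx.2.1 n)

lemma integrableOn_invpow (i : Fin n) {r R : ℝ} (hr : 0 < r) :
    IntegrableOn (fun x : EuclideanSpace ℝ (Fin n) => (‖x‖ ^ n)⁻¹) (halfAnn n i r R) := by
  have := integrableOn_mul_invpow i (R := R) hr (h := fun _ => (1:ℝ)) measurable_const
    (integrableOn_const (halfAnn_vol_lt_top i).ne)
  simpa only [one_mul] using this

lemma integrableOn_invpow_Ioc {r R : ℝ} (hr : 0 < r) :
    IntegrableOn (fun s : ℝ => (s ^ (n + 1))⁻¹) (Ioc r R) := by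
  apply Measure.integrableOn_of_bounded (M := (r ^ (n + 1))⁻¹)
  · rw [Real.volume_Ioc]; exact ENNReal.ofReal_lt_top.ne
  · exact ((measurable_id.pow_const (n + 1)).inv).aestronglyMeasurable
  · apply MeasureTheory.ae_restrict_of_forall_mem measurableSet_Ioc
    intro s hs
    have hs0 : (0:ℝ) < s := hr.trans hs.1
    rw [Real.norm_eq_abs, abs_of_nonneg (by positivity)]
    exact inv_anti₀ (by positivity) (pow_le_pow_left₀ hr.le hs.1.le _)

theorem mean_dilatation_identity (n : ℕ) (hn : 2 ≤ n)
    (t : EuclideanSpace ℝ (Fin n)) (ht : t ⟨n - 1, by omega⟩ = 0)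
    (r R : ℝ) (hr : 0 < r) (hR : r < R)
    (g : EuclideanSpace ℝ (Fin n) → ℝ) (hg0 : ∀ x, 0 ≤ g x) (hgm : Measurable g)
    (hgi : IntegrableOn g (semiring n hn t 0 R))
    (ω : ℝ → ℝ)
    (hω : ∀ s, 0 < s → s ≤ R → ω s =
      (2 / ((volume (ball (0 : EuclideanSpace ℝ (Fin n)) 1)).toReal * s ^ n)) *
        ∫ x in semiring n hn t 0 s, (g x - 1))
    (P : ℝ)
    (hP : P = (2 / (((n : ℝ) *
        (volume (ball (0 : EuclideanSpace ℝ (Fin n)) 1)).toReal) *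
          Real.log (R / r))) *
      ∫ x in semiring n hn t r R, g x / ‖x - t‖ ^ n) :
    (P - 1) * Real.log (R / r) = (ω R - ω r) / n + ∫ s in r..R, ω s / s := by
  set V : ℝ := (volume (ball (0 : EuclideanSpace ℝ (Fin n)) 1)).toReal with hVdef
  set L : ℝ := Real.log (R / r) with hLdef
  haveI : Nonempty (Fin n) := ⟨⟨0, by omega⟩⟩
  have hV : 0 < V := by
    rw [hVdef]
    exact ENNReal.toReal_pos (measure_ball_pos volume 0 one_pos).ne' measure_ball_lt_top.ne
  have hL : 0 < L := Real.log_pos ((one_lt_div hr).2 hR)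
  have hn0 : (0:ℝ) < n := by positivity
  have hR0 : (0:ℝ) < R := hr.trans hR
  set h₀ : EuclideanSpace ℝ (Fin n) → ℝ := fun y => g (y + t) - 1 with hh₀
  have h₀m : Measurable h₀ := (hgm.comp (measurable_add_const t)).sub measurable_const
  have hg' : IntegrableOn (fun y => g (y + t))
      (halfAnn n ⟨n - 1, by omega⟩ 0 R) := integrableOn_translate hn t ht 0 R hgi
  have h₀int : IntegrableOn h₀ (halfAnn n ⟨n - 1, by omega⟩ 0 R) :=
    hg'.sub (integrableOn_const (halfAnn_vol_lt_top _).ne)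
  have h₀int' : IntegrableOn h₀ (halfAnn n ⟨n - 1, by omega⟩ r R) :=
    h₀int.mono_set (halfAnn_subset _ hr.le le_rfl)
  obtain ⟨hFub, hJint⟩ := fubini_ann hn ⟨n - 1, by omega⟩ hr hR h₀ h₀m h₀int'
  set Fr : ℝ := ∫ y in halfAnn n ⟨n - 1, by omega⟩ 0 r, h₀ y with hFrdef
  set FR : ℝ := ∫ y in halfAnn n ⟨n - 1, by omega⟩ 0 R, h₀ y with hFRdef
  set I0 : ℝ := ∫ y in halfAnn n ⟨n - 1, by omega⟩ r R, h₀ y with hI0def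
  set J : ℝ := ∫ s in Ioc r R,
    (s ^ (n + 1))⁻¹ * ∫ y in halfAnn n ⟨n - 1, by omega⟩ r s, h₀ y with hJdef
  have hFR : FR = Fr + I0 := F_split hn _ hr hR.le le_rfl h₀ h₀int
  -- ω values
  have hωR : ω R = 2 / (V * R ^ n) * FR := by
    rw [hω R hR0 le_rfl, translate_semiring hn t ht 0 R (fun x => g x - 1)]
  have hωr : ω r = 2 / (V * r ^ n) * Fr := by
    rw [hω r hr hR.le, translate_semiring hn t ht 0 r (fun x => g x - 1)]
  -- the integral of ω s / s
  have hSω : ∫ s in r..R, ω s / s =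
      (2 / V * Fr) * (((r ^ n)⁻¹ - (R ^ n)⁻¹) / n) + (2 / V) * J := by
    rw [intervalIntegral.integral_of_le hR.le]
    have hcong : ∀ s ∈ Ioc r R, ω s / s =
        (2 / V * Fr) * (s ^ (n + 1))⁻¹ +
          (2 / V) * ((s ^ (n + 1))⁻¹ * ∫ y in halfAnn n ⟨n - 1, by omega⟩ r s, h₀ y) := by
      intro s hs
      have hs0 : (0:ℝ) < s := hr.trans hs.1
      rw [hω s hs0 hs.2, translate_semiring hn t ht 0 s (fun x => g x - 1),
        F_split hn _ hr hs.1.le hs.2 h₀ h₀int]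
      have hpow : s ^ (n + 1) = s ^ n * s := pow_succ s n
      rw [hpow]
      have hsn : s ^ n ≠ 0 := by positivity
      field_simp
      ring
    rw [setIntegral_congr_fun measurableSet_Ioc hcong,
      integral_add ((integrableOn_invpow_Ioc hr).const_mul _) (hJint.const_mul _),
      integral_const_mul, integral_const_mul, ← intervalIntegral.integral_of_le hR.le,
      int_pow_inv (by omega) hr hR.le]
  set IA : ℝ := ∫ y in halfAnn n ⟨n - 1, by omega⟩ r R, h₀ y * (‖y‖ ^ n)⁻¹ with hIAdef
  -- the integral defining P
  have hPI : ∫ x in semiring n hn t r R, g x / ‖x - t‖ ^ n =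
      IA + (n : ℝ) * V * L / 2 := by
    rw [translate_semiring hn t ht r R (fun x => g x / ‖x - t‖ ^ n)]
    have hcong : ∀ y ∈ halfAnn n ⟨n - 1, by omega⟩ r R,
        g (y + t) / ‖y + t - t‖ ^ n = h₀ y * (‖y‖ ^ n)⁻¹ + (‖y‖ ^ n)⁻¹ := by
      intro y hy
      rw [add_sub_cancel_right, div_eq_mul_inv, hh₀]
      ring
    rw [setIntegral_congr_fun (measurableSet_halfAnn _ r R) hcong,
      integral_add (integrableOn_mul_invpow _ hr h₀m h₀int') (integrableOn_invpow _ hr),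
      radial_int hn _ hr hR]
  have hrn : (r:ℝ) ^ n ≠ 0 := by positivity
  have hRn : (R:ℝ) ^ n ≠ 0 := by positivity
  have hV0 : V ≠ 0 := hV.ne'
  have hL0 : L ≠ 0 := hL.ne'
  have hnne : (n:ℝ) ≠ 0 := hn0.ne'
  rw [hP, hPI, hωR, hωr, hSω, hFub, hFR]
  field_simp
  ring
end

section
/- Let n ≥ 2, let f : ℝⁿ → ℝⁿ be differentiable at a point x with invertible derivative A = f′(x) (so x is a regular point of f). Then the linear dilatation of f at x equals the linear dilatation coefficient of A: lim_{r→0⁺} L(x,r)/l(x,r) = ‖A‖/l(A), where L(x,r) = sup_{|y−x|=r} |f(y) − f(x)| and l(x,r) = inf_{|y−x|=r} |f(y) − f(x)|. -/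
open Metric Filter

private lemma div_div_aux (a b r : ℝ) (hr : r ≠ 0) : a / r / (b / r) = a / b := by
  rcases eq_or_ne b 0 with rfl | hb
  · simp
  · field_simp

set_option maxHeartbeats 1000000 in
theorem linear_dilatation_at_regular_point (n : ℕ) (hn : 2 ≤ n)
    (f : EuclideanSpace ℝ (Fin n) → EuclideanSpace ℝ (Fin n))
    (x : EuclideanSpace ℝ (Fin n))
    (A : EuclideanSpace ℝ (Fin n) →L[ℝ] EuclideanSpace ℝ (Fin n))
    (hA : HasFDerivAt f A x)
    (hdet : LinearMap.det
      (A : EuclideanSpace ℝ (Fin n) →ₗ[ℝ] EuclideanSpace ℝ (Fin n)) ≠ 0) :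
    Tendsto (fun r : ℝ =>
        sSup ((fun y => ‖f y - f x‖) '' sphere x r) /
          sInf ((fun y => ‖f y - f x‖) '' sphere x r))
      (nhdsWithin 0 (Set.Ioi 0)) (nhds (‖A‖ / minNorm n A)) := by
  haveI : Nonempty (Fin n) := ⟨⟨0, by omega⟩⟩
  haveI : Nontrivial (EuclideanSpace ℝ (Fin n)) :=
    ⟨0, EuclideanSpace.single ⟨0, by omega⟩ (1 : ℝ), by
      intro h
      have h2 : (0 : EuclideanSpace ℝ (Fin n)) ⟨0, by omega⟩ = EuclideanSpace.single (⟨0, by omega⟩ : Fin n) (1 : ℝ) ⟨0, by omega⟩ := by rw [← h]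
      rw [EuclideanSpace.single_apply] at h2
      simp only [if_pos rfl] at h2
      exact zero_ne_one h2⟩
  -- compact unit sphere, extremes attained
  have hcs : IsCompact (sphere (0 : EuclideanSpace ℝ (Fin n)) 1) := isCompact_sphere 0 1
  have hsne : (sphere (0 : EuclideanSpace ℝ (Fin n)) 1).Nonempty := NormedSpace.sphere_nonempty.2 one_pos.le
  have hcont : ContinuousOn (fun h : EuclideanSpace ℝ (Fin n) => ‖A h‖) (sphere (0 : EuclideanSpace ℝ (Fin n)) 1) :=
    (A.continuous.norm).continuousOn
  obtain ⟨(h₀ : EuclideanSpace ℝ (Fin n)), h₀mem, h₀max⟩ := hcs.exists_isMaxOn hsne hcont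
  obtain ⟨h₁, h₁mem, h₁min⟩ := hcs.exists_isMinOn hsne hcont
  have h₀norm : ‖h₀‖ = 1 := by simpa using h₀mem
  have h₁norm : ‖h₁‖ = 1 := by simpa using h₁mem
  -- max value is the operator norm
  have hAnorm : ‖A h₀‖ = ‖A‖ := by
    refine le_antisymm (by simpa [h₀norm] using A.le_opNorm h₀) ?_
    refine A.opNorm_le_bound (norm_nonneg _) fun h => ?_
    rcases eq_or_ne h 0 with rfl | hne
    · simp
    · have hnorm : 0 < ‖h‖ := norm_pos_iff.2 hne
      have hmem : (‖h‖⁻¹ • h) ∈ sphere (0 : EuclideanSpace ℝ (Fin n)) 1 := by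
        simp [norm_smul, abs_of_pos (inv_pos.2 hnorm), inv_mul_cancel₀ hnorm.ne']
      have hle := h₀max hmem
      simp only [IsMaxOn, IsMinOn, Set.mem_setOf_eq, map_smul, norm_smul, norm_inv, Real.norm_eq_abs,
        abs_of_pos hnorm] at hle
      calc ‖A h‖ = ‖h‖ * (‖h‖⁻¹ * ‖A h‖) := by field_simp
        _ ≤ ‖h‖ * ‖A h₀‖ := mul_le_mul_of_nonneg_left hle hnorm.le
        _ = ‖A h₀‖ * ‖h‖ := mul_comm _ _
  -- min value is minNorm
  have hmNorm : minNorm n A = ‖A h₁‖ := by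
    refine le_antisymm (csInf_le ⟨0, ?_⟩ ⟨h₁, h₁mem, rfl⟩) (le_csInf (hsne.image _) ?_)
    · rintro a ⟨h, _, rfl⟩; exact norm_nonneg _
    · rintro a ⟨h, hmem, rfl⟩; exact h₁min hmem
  have hmpos : 0 < ‖A h₁‖ := by
    rcases eq_or_ne (A h₁) 0 with h0 | hne
    · exfalso
      let e := LinearMap.equivOfDetNeZero (A : EuclideanSpace ℝ (Fin n) →ₗ[ℝ] EuclideanSpace ℝ (Fin n)) hdet
      have he : ∀ z : EuclideanSpace ℝ (Fin n), e z = A z := fun z => rfl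
      have h10 : h₁ = (0 : EuclideanSpace ℝ (Fin n)) := by
        apply e.injective
        rw [he, h0, he, map_zero]
      rw [h10] at h₁norm; simp at h₁norm
    · exact norm_pos_iff.2 hne
  -- lower bound for ‖A h‖
  have hlow : ∀ h : EuclideanSpace ℝ (Fin n), ‖A h₁‖ * ‖h‖ ≤ ‖A h‖ := by
    intro h
    rcases eq_or_ne h 0 with rfl | hne
    · simp
    · have hnorm : 0 < ‖h‖ := norm_pos_iff.2 hne
      have hmem : (‖h‖⁻¹ • h) ∈ sphere (0 : EuclideanSpace ℝ (Fin n)) 1 := by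
        simp [norm_smul, abs_of_pos (inv_pos.2 hnorm), inv_mul_cancel₀ hnorm.ne']
      have hle := h₁min hmem
      simp only [IsMaxOn, IsMinOn, Set.mem_setOf_eq, map_smul, norm_smul, norm_inv, Real.norm_eq_abs,
        abs_of_pos hnorm] at hle
      calc ‖A h₁‖ * ‖h‖ ≤ (‖h‖⁻¹ * ‖A h‖) * ‖h‖ :=
            mul_le_mul_of_nonneg_right hle hnorm.le
        _ = ‖A h‖ := by field_simp
  have littleO := hA.isLittleO
  -- the sup limit
  have hS : Tendsto (fun r : ℝ => sSup ((fun y => ‖f y - f x‖) '' sphere x r) / r)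
      (nhdsWithin 0 (Set.Ioi 0)) (nhds ‖A‖) := by
    rw [Metric.tendsto_nhds]
    intro ε hε
    have h2 := littleO.def (half_pos hε)
    rw [Metric.eventually_nhds_iff] at h2
    obtain ⟨δ, hδ, hδ'⟩ := h2
    filter_upwards [Ioo_mem_nhdsGT_of_mem ⟨le_refl (0 : ℝ), hδ⟩] with r hr
    obtain ⟨hr0, hrδ⟩ := hr
    have hyb : ∀ y ∈ sphere x r, |‖f y - f x‖ - ‖A (y - x)‖| ≤ ε / 2 * r := by
      intro y hy
      rw [mem_sphere] at hy
      have hyx : ‖y - x‖ = r := by rw [← dist_eq_norm]; exact hy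
      have hb := hδ' (show dist y x < δ by rw [hy]; exact hrδ)
      rw [hyx] at hb
      exact le_trans (abs_norm_sub_norm_le _ _) hb
    have hne : ((fun y => ‖f y - f x‖) '' sphere x r).Nonempty :=
      (NormedSpace.sphere_nonempty.2 hr0.le).image _
    have hub : ∀ a ∈ (fun y => ‖f y - f x‖) '' sphere x r, a ≤ (‖A‖ + ε / 2) * r := by
      rintro a ⟨y, hy, rfl⟩
      have h1 := (abs_le.1 (hyb y hy)).2
      have hyx : ‖y - x‖ = r := by rw [← dist_eq_norm]; rwa [mem_sphere] at hy
      have h2 : ‖A (y - x)‖ ≤ ‖A‖ * r := by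
        have := A.le_opNorm (y - x); rwa [hyx] at this
      nlinarith
    have hmemy : x + r • h₀ ∈ sphere x r := by
      rw [mem_sphere, dist_eq_norm]
      simp [norm_smul, abs_of_pos hr0, h₀norm]
    have hAy : ‖A ((x + r • h₀) - x)‖ = ‖A‖ * r := by
      rw [add_sub_cancel_left, map_smul, norm_smul, Real.norm_eq_abs,
        abs_of_pos hr0, hAnorm, mul_comm]
    have hSup_le : sSup ((fun y => ‖f y - f x‖) '' sphere x r) ≤ (‖A‖ + ε / 2) * r :=
      csSup_le hne hub
    have hle_Sup : (‖A‖ - ε / 2) * r ≤ sSup ((fun y => ‖f y - f x‖) '' sphere x r) := by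
      have hmem' : ‖f (x + r • h₀) - f x‖ ∈ (fun y => ‖f y - f x‖) '' sphere x r :=
        ⟨_, hmemy, rfl⟩
      have h1 := (abs_le.1 (hyb _ hmemy)).1
      rw [hAy] at h1
      have h2 := le_csSup ⟨(‖A‖ + ε / 2) * r, hub⟩ hmem'
      nlinarith
    rw [Real.dist_eq, abs_sub_lt_iff]
    constructor
    · have := (div_le_iff₀ hr0).2 hSup_le
      linarith
    · have := (le_div_iff₀ hr0).2 hle_Sup
      linarith
  -- the inf limit
  have hI : Tendsto (fun r : ℝ => sInf ((fun y => ‖f y - f x‖) '' sphere x r) / r)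
      (nhdsWithin 0 (Set.Ioi 0)) (nhds ‖A h₁‖) := by
    rw [Metric.tendsto_nhds]
    intro ε hε
    have h2 := littleO.def (half_pos hε)
    rw [Metric.eventually_nhds_iff] at h2
    obtain ⟨δ, hδ, hδ'⟩ := h2
    filter_upwards [Ioo_mem_nhdsGT_of_mem ⟨le_refl (0 : ℝ), hδ⟩] with r hr
    obtain ⟨hr0, hrδ⟩ := hr
    have hyb : ∀ y ∈ sphere x r, |‖f y - f x‖ - ‖A (y - x)‖| ≤ ε / 2 * r := by
      intro y hy
      rw [mem_sphere] at hy
      have hyx : ‖y - x‖ = r := by rw [← dist_eq_norm]; exact hy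
      have hb := hδ' (show dist y x < δ by rw [hy]; exact hrδ)
      rw [hyx] at hb
      exact le_trans (abs_norm_sub_norm_le _ _) hb
    have hne : ((fun y => ‖f y - f x‖) '' sphere x r).Nonempty :=
      (NormedSpace.sphere_nonempty.2 hr0.le).image _
    have hlb : ∀ a ∈ (fun y => ‖f y - f x‖) '' sphere x r, (‖A h₁‖ - ε / 2) * r ≤ a := by
      rintro a ⟨y, hy, rfl⟩
      have h1 := (abs_le.1 (hyb y hy)).1
      have hyx : ‖y - x‖ = r := by rw [← dist_eq_norm]; rwa [mem_sphere] at hy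
      have h2 : ‖A h₁‖ * r ≤ ‖A (y - x)‖ := by
        have := hlow (y - x); rwa [hyx] at this
      nlinarith
    have hmemy : x + r • h₁ ∈ sphere x r := by
      rw [mem_sphere, dist_eq_norm]
      simp [norm_smul, abs_of_pos hr0, h₁norm]
    have hAy : ‖A ((x + r • h₁) - x)‖ = ‖A h₁‖ * r := by
      rw [add_sub_cancel_left, map_smul, norm_smul, Real.norm_eq_abs,
        abs_of_pos hr0, mul_comm]
    have hle_Inf : (‖A h₁‖ - ε / 2) * r ≤ sInf ((fun y => ‖f y - f x‖) '' sphere x r) :=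
      le_csInf hne hlb
    have hInf_le : sInf ((fun y => ‖f y - f x‖) '' sphere x r) ≤ (‖A h₁‖ + ε / 2) * r := by
      have hmem' : ‖f (x + r • h₁) - f x‖ ∈ (fun y => ‖f y - f x‖) '' sphere x r :=
        ⟨_, hmemy, rfl⟩
      have h1 := (abs_le.1 (hyb _ hmemy)).2
      rw [hAy] at h1
      have h2 := csInf_le ⟨(‖A h₁‖ - ε / 2) * r, hlb⟩ hmem'
      nlinarith
    rw [Real.dist_eq, abs_sub_lt_iff]
    constructor
    · have := (div_le_iff₀ hr0).2 hInf_le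
      linarith
    · have := (le_div_iff₀ hr0).2 hle_Inf
      linarith
  rw [hmNorm]
  refine Tendsto.congr' ?_ (hS.div hI hmpos.ne')
  filter_upwards [self_mem_nhdsWithin] with r hr
  exact div_div_aux _ _ r (ne_of_gt hr)
end
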